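/- arXiv:1409.4749 — 3 statements merged into one kernel-verified Lean document; each statement's English description precedes it below -/
import Mathlib

section
/- Let V = v(M, θ) be a rectifiable d-varifold in an open set Ω ⊆ ℝⁿ. Let x ∈ M be a point where the approximate tangent plane T_xM exists and θ(x) > 0. Then for every P ∈ G(d,n) with P ≠ T_xM, the averaged height excess E₀(x, P, V) = ∫₀¹ r^{−(d+1)} ∫_{B_r(x)∩Ω} (d(y−x,P)/r)² d‖V‖(y) dr is infinite. -/
open MeasureTheory Metric Set Filter
open scoped ENNReal Topology
open scoped Pointwise

variable {n : ℕ}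

/-- The averaged height excess
`E₀(x,P,V) = ∫₀¹ r^{−(d+1)} ∫_{B_r(x)∩Ω} (d(y−x,P)/r)² d‖V‖(y) dr`, written in terms of the
mass measure `μ = ‖V‖`. -/
noncomputable def E0 (d : ℕ) (Ω : Set (EuclideanSpace ℝ (Fin n)))
    (μ : Measure (EuclideanSpace ℝ (Fin n))) (x : EuclideanSpace ℝ (Fin n))
    (P : Submodule ℝ (EuclideanSpace ℝ (Fin n))) : ℝ≥0∞ :=
  ∫⁻ r in Set.Ioo (0 : ℝ) 1,
    ENNReal.ofReal (1 / r ^ (d + 1)) *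
      ∫⁻ y in Metric.ball x r ∩ Ω,
        ENNReal.ofReal ((Metric.infDist (y - x) (P : Set (EuclideanSpace ℝ (Fin n))) / r) ^ 2) ∂μ

/-- A set is countably `d`-rectifiable if it can be covered, up to an `ℋᵈ`-null set, by
countably many Lipschitz images of `ℝᵈ`. -/
def CountablyDRectifiable (d : ℕ) (M : Set (EuclideanSpace ℝ (Fin n))) : Prop :=
  ∃ (M₀ : Set (EuclideanSpace ℝ (Fin n)))
    (f : ℕ → EuclideanSpace ℝ (Fin d) → EuclideanSpace ℝ (Fin n)),
    μH[(d : ℝ)] M₀ = 0 ∧ (∀ i, ∃ K : NNReal, LipschitzWith K (f i)) ∧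
      M ⊆ M₀ ∪ ⋃ i, Set.range (f i)

/-- `μ` has approximate tangent plane `P` (with some positive multiplicity) at `x`. -/
def ApproxTangentAt (d : ℕ) (μ : Measure (EuclideanSpace ℝ (Fin n)))
    (x : EuclideanSpace ℝ (Fin n)) (P : Submodule ℝ (EuclideanSpace ℝ (Fin n))) : Prop :=
  ∃ θ₀ : ℝ, 0 < θ₀ ∧ ∀ φ : EuclideanSpace ℝ (Fin n) → ℝ, Continuous φ → HasCompactSupport φ →
    Tendsto (fun r : ℝ => (r ^ d)⁻¹ * ∫ y, φ (r⁻¹ • (y - x)) ∂μ) (𝓝[>] 0)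
      (𝓝 (θ₀ * ∫ y in (P : Set (EuclideanSpace ℝ (Fin n))), φ y ∂(μH[(d : ℝ)])))

set_option maxHeartbeats 1000000

lemma lintegral_const_div_Ioo_eq_top {a K : ℝ} (ha : 0 < a) (hK : 0 < K) :
    ∫⁻ r in Set.Ioo (0:ℝ) a, ENNReal.ofReal (K / r) = ⊤ := by
  by_contra h
  have hnn : 0 ≤ᵐ[volume.restrict (Ioo (0:ℝ) a)] fun r => K / r := by
    filter_upwards [ae_restrict_mem measurableSet_Ioo] with r hr
    have : (0:ℝ) < r := hr.1
    positivity
  have hint : IntegrableOn (fun r : ℝ => K / r) (Ioo 0 a) := by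
    refine ⟨(measurable_const.div measurable_id).aestronglyMeasurable, ?_⟩
    rw [hasFiniteIntegral_iff_ofReal hnn]
    exact lt_top_iff_ne_top.2 h
  have h2 : IntegrableOn (fun r : ℝ => r ^ (-1:ℝ)) (Ioo 0 a) := by
    have h3 : Integrable (fun r : ℝ => K⁻¹ * (K / r)) (volume.restrict (Ioo (0:ℝ) a)) :=
      hint.const_mul _
    refine (IntegrableOn.congr_fun h3 ?_ measurableSet_Ioo :)
    intro r hr
    have hr0 : r ≠ 0 := ne_of_gt hr.1
    show K⁻¹ * (K / r) = r ^ (-1:ℝ)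
    rw [Real.rpow_neg_one]
    field_simp
  have := (intervalIntegral.integrableOn_Ioo_rpow_iff ha).1 h2
  norm_num at this



/-- Let `V = v(M,θ)` be a rectifiable `d`-varifold in an open set `Ω`
(its mass is `‖V‖ = θ ℋᵈ|_M`), and let `x ∈ M` be a point where the approximate tangent
plane `T` of `‖V‖` exists with positive multiplicity. Then for every `d`-plane `P ≠ T`, the
averaged height excess `E₀(x,P,V)` is infinite. -/
theorem E0_eq_top_of_ne_tangent {d : ℕ}
    (Ω : Set (EuclideanSpace ℝ (Fin n))) (hΩ : IsOpen Ω)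
    (M : Set (EuclideanSpace ℝ (Fin n))) (hM : CountablyDRectifiable d M) (hMΩ : M ⊆ Ω)
    (θ : EuclideanSpace ℝ (Fin n) → ℝ≥0∞)
    (μ : Measure (EuclideanSpace ℝ (Fin n)))
    (hμ : μ = ((μH[(d : ℝ)]).restrict M).withDensity θ)
    [IsFiniteMeasureOnCompacts μ]
    (x : EuclideanSpace ℝ (Fin n)) (hx : x ∈ M)
    (T : Submodule ℝ (EuclideanSpace ℝ (Fin n))) (hT : Module.finrank ℝ T = d)
    (htan : ApproxTangentAt d μ x T) :
    ∀ P : Submodule ℝ (EuclideanSpace ℝ (Fin n)), Module.finrank ℝ P = d → P ≠ T →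
      E0 d Ω μ x P = ⊤ := by
  intro P hPd hPT
  -- find v' ∈ T \ P with ‖v'‖ = 1/2
  have hnotle : ¬ T ≤ P := by
    intro hle
    exact hPT (Submodule.eq_of_le_of_finrank_eq hle (by rw [hT, hPd])).symm
  obtain ⟨v, hvT, hvP⟩ := SetLike.not_le_iff_exists.1 hnotle
  clear hnotle hPT hμ hM
  have hv0 : v ≠ 0 := fun h => hvP (h ▸ P.zero_mem)
  have hvnorm : (0:ℝ) < ‖v‖ := norm_pos_iff.2 hv0
  obtain ⟨c, hc0, hcpos⟩ : ∃ c : ℝ, c ≠ 0 ∧ 0 < c := ⟨(2 * ‖v‖)⁻¹, by positivity, by positivity⟩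
  set v' : EuclideanSpace ℝ (Fin n) := (2 * ‖v‖)⁻¹ • v with hv'_def
  have hv'T : v' ∈ T := T.smul_mem _ hvT
  have hv'P : v' ∉ P := fun h => hvP ((P.smul_mem_iff (by positivity : (2 * ‖v‖)⁻¹ ≠ 0)).1 h)
  have hv'norm : ‖v'‖ = 1/2 := by
    rw [hv'_def, norm_smul, Real.norm_eq_abs, abs_of_pos (by positivity)]
    field_simp
  -- δ, ρ, β
  have hPclosed : IsClosed (P : Set (EuclideanSpace ℝ (Fin n))) := P.closed_of_finiteDimensional
  set δ : ℝ := infDist v' (P : Set (EuclideanSpace ℝ (Fin n))) with hδ_def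
  have hδpos : 0 < δ := (hPclosed.notMem_iff_infDist_pos ⟨0, P.zero_mem⟩).1 hv'P
  set ρ : ℝ := min (δ/4) 8⁻¹ with hρ_def
  have hρpos : 0 < ρ := lt_min (by positivity) (by norm_num)
  have hρδ : 2*ρ ≤ δ/2 := by
    have h1 : ρ ≤ δ/4 := min_le_left _ _
    linarith
  have hρ4 : 2*ρ ≤ 1/4 := by
    have h1 : ρ ≤ 8⁻¹ := min_le_right _ _
    linarith
  set β : ℝ := δ/2 with hβ_def
  have hβpos : 0 < β := by positivity
  -- the bump function
  set φ : EuclideanSpace ℝ (Fin n) → ℝ :=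
    fun z => max 0 (min 1 ((2*ρ - dist z v')/ρ)) with hφ_def
  have φcont : Continuous φ :=
    continuous_const.max (continuous_const.min
      ((continuous_const.sub (continuous_id.dist continuous_const)).div_const ρ))
  have hφ_nonneg : ∀ z, 0 ≤ φ z := fun z => le_max_left _ _
  have hφ_le_one : ∀ z, φ z ≤ 1 := fun z => max_le zero_le_one (min_le_left _ _)
  have hφ_one : ∀ z, dist z v' ≤ ρ → φ z = 1 := by
    intro z hz
    have h1 : (1:ℝ) ≤ (2*ρ - dist z v')/ρ := by
      rw [le_div_iff₀ hρpos]; linarith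
    rw [hφ_def]; simp only [min_eq_left h1, max_eq_right zero_le_one]
  have hφ_supp : ∀ z, φ z ≠ 0 → dist z v' < 2*ρ := by
    intro z hz
    by_contra h
    push_neg at h
    apply hz
    have h1 : (2*ρ - dist z v')/ρ ≤ 0 :=
      div_nonpos_iff.2 (Or.inr ⟨by linarith, hρpos.le⟩)
    rw [hφ_def]
    simp only [max_eq_left (le_trans (min_le_right _ _) h1)]
  have φcs : HasCompactSupport φ := by
    refine HasCompactSupport.intro (isCompact_closedBall v' (2*ρ)) (fun z hz => ?_)
    by_contra h
    exact hz (mem_closedBall.2 (hφ_supp z h).le)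
  -- distance of support from P
  have hfar : ∀ z : EuclideanSpace ℝ (Fin n),
      dist z v' < 2*ρ → β ≤ infDist z (P : Set (EuclideanSpace ℝ (Fin n))) := by
    intro z hz
    have h1 : infDist v' (P : Set (EuclideanSpace ℝ (Fin n)))
        ≤ infDist z (P : Set (EuclideanSpace ℝ (Fin n))) + dist v' z :=
      infDist_le_infDist_add_dist
    rw [dist_comm] at h1
    have h2 : δ ≤ infDist z (P : Set (EuclideanSpace ℝ (Fin n))) + dist z v' := h1
    rw [hβ_def]
    linarith
  -- support is in the unit ball
  have hnorm1 : ∀ z : EuclideanSpace ℝ (Fin n), dist z v' < 2*ρ → ‖z‖ < 1 := by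
    intro z hz
    have h1 : ‖z‖ ≤ dist z v' + ‖v'‖ := by
      calc ‖z‖ = dist z 0 := (dist_zero_right z).symm
        _ ≤ dist z v' + dist v' 0 := dist_triangle _ _ _
        _ = dist z v' + ‖v'‖ := by rw [dist_zero_right]
    rw [hv'norm] at h1; linarith
  -- Hausdorff measure on T
  haveI hHaar : (μH[(d:ℝ)] : Measure ↥T).IsAddHaarMeasure := by
    have h := isAddHaarMeasure_hausdorffMeasure (E := ↥T)
    rwa [hT] at h
  have hiso : Isometry ((↑) : ↥T → EuclideanSpace ℝ (Fin n)) := T.subtypeₗᵢ.isometry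
  have hd0 : (0:ℝ) ≤ (d:ℝ) := by positivity
  have himg : ∀ s : Set ↥T,
      μH[(d:ℝ)] (((↑) : ↥T → EuclideanSpace ℝ (Fin n)) '' s) = μH[(d:ℝ)] s :=
    fun s => hiso.hausdorffMeasure_image (Or.inl hd0) s
  have hrange : Set.range ((↑) : ↥T → EuclideanSpace ℝ (Fin n))
      = (T : Set (EuclideanSpace ℝ (Fin n))) := Subtype.range_coe_subtype
  -- positivity
  have hA : (0:ℝ≥0∞) < μH[(d:ℝ)] (ball v' ρ ∩ (T : Set (EuclideanSpace ℝ (Fin n)))) := by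
    have hAopen : IsOpen (((↑) : ↥T → EuclideanSpace ℝ (Fin n)) ⁻¹' ball v' ρ) :=
      isOpen_ball.preimage continuous_subtype_val
    have hAne : (((↑) : ↥T → EuclideanSpace ℝ (Fin n)) ⁻¹' ball v' ρ).Nonempty :=
      ⟨⟨v', hv'T⟩, by simp [mem_ball, hρpos]⟩
    have h1 := hAopen.measure_pos (μH[(d:ℝ)] : Measure ↥T) hAne
    rwa [← himg, Set.image_preimage_eq_inter_range, hrange] at h1
  -- finiteness
  have hB : μH[(d:ℝ)] (closedBall v' (2*ρ) ∩ (T : Set (EuclideanSpace ℝ (Fin n)))) < ⊤ := by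
    have hBeq : (((↑) : ↥T → EuclideanSpace ℝ (Fin n)) ⁻¹' closedBall v' (2*ρ))
        = closedBall (⟨v', hv'T⟩ : ↥T) (2*ρ) := by
      ext z; simp [mem_closedBall, Subtype.dist_eq]
    have hBcomp : IsCompact (((↑) : ↥T → EuclideanSpace ℝ (Fin n)) ⁻¹' closedBall v' (2*ρ)) := by
      rw [hBeq]; exact isCompact_closedBall _ _
    have h1 := hBcomp.measure_lt_top (μ := (μH[(d:ℝ)] : Measure ↥T))
    rwa [← himg, Set.image_preimage_eq_inter_range, hrange] at h1
  -- integrability of φ on T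
  set ν : Measure (EuclideanSpace ℝ (Fin n)) :=
    (μH[(d:ℝ)]).restrict (T : Set (EuclideanSpace ℝ (Fin n))) with hν_def
  have hν_cball : ν (closedBall v' (2*ρ)) < ⊤ := by
    rw [hν_def, Measure.restrict_apply measurableSet_closedBall]
    exact hB
  have hν_ball_pos : 0 < ν (ball v' ρ) := by
    rw [hν_def, Measure.restrict_apply measurableSet_ball]
    exact hA
  have hν_ball_lt : ν (ball v' ρ) < ⊤ :=
    lt_of_le_of_lt (measure_mono (fun y hy => le_trans (mem_ball.1 hy).le (by linarith))) hν_cball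
  have hφint : Integrable φ ν := by
    refine ⟨φcont.aestronglyMeasurable, ?_⟩
    rw [hasFiniteIntegral_iff_ofReal (Eventually.of_forall hφ_nonneg)]
    calc ∫⁻ z, ENNReal.ofReal (φ z) ∂ν
        ≤ ∫⁻ z, (closedBall v' (2*ρ)).indicator (fun _ => (1:ℝ≥0∞)) z ∂ν := by
          refine lintegral_mono fun z => ?_
          by_cases hz : z ∈ closedBall v' (2*ρ)
          · simp only [indicator_of_mem hz]
            exact le_trans (ENNReal.ofReal_le_ofReal (hφ_le_one z)) (by simp)
          · have h0 : φ z = 0 := by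
              by_contra h
              exact hz (mem_closedBall.2 (hφ_supp z h).le)
            simp [h0, indicator_of_notMem hz]
      _ = ν (closedBall v' (2*ρ)) := by
          rw [lintegral_indicator measurableSet_closedBall]; simp
      _ < ⊤ := hν_cball
  -- the integral of φ over T is positive
  have hφTpos : 0 < ∫ y in (T : Set (EuclideanSpace ℝ (Fin n))), φ y ∂(μH[(d:ℝ)]) := by
    have hind : Integrable ((ball v' ρ).indicator (fun _ => (1:ℝ))) ν := by
      rw [integrable_indicator_iff measurableSet_ball]
      exact integrableOn_const hν_ball_lt.ne
    have hle : ∀ z, (ball v' ρ).indicator (fun _ => (1:ℝ)) z ≤ φ z := by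
      intro z
      by_cases hz : z ∈ ball v' ρ
      · rw [indicator_of_mem hz, hφ_one z (mem_ball.1 hz).le]
      · rw [indicator_of_notMem hz]; exact hφ_nonneg z
    have h1 : (ν (ball v' ρ)).toReal ≤ ∫ z, φ z ∂ν := by
      have h2 := integral_mono hind hφint hle
      rwa [integral_indicator measurableSet_ball, setIntegral_const, smul_eq_mul, mul_one] at h2
    have h2 : 0 < (ν (ball v' ρ)).toReal :=
      ENNReal.toReal_pos hν_ball_pos.ne' hν_ball_lt.ne
    exact lt_of_lt_of_le h2 h1
  -- tangent plane limit
  obtain ⟨θ₀, hθ₀, hlim⟩ := htan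
  set L : ℝ := θ₀ * ∫ y in (T : Set (EuclideanSpace ℝ (Fin n))), φ y ∂(μH[(d:ℝ)]) with hL_def
  have hLpos : 0 < L := mul_pos hθ₀ hφTpos
  have hev : ∀ᶠ r in 𝓝[>] (0:ℝ),
      L/2 < (r ^ d)⁻¹ * ∫ y, φ (r⁻¹ • (y - x)) ∂μ :=
    (hlim φ φcont φcs).eventually (eventually_gt_nhds (half_lt_self hLpos))
  rw [(nhdsGT_basis (0:ℝ)).eventually_iff] at hev
  obtain ⟨r₀, hr₀pos, hr₀⟩ := hev
  -- x ∈ Ω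
  obtain ⟨ε, hεpos, hεΩ⟩ := Metric.isOpen_iff.1 hΩ x (hMΩ hx)
  set r₁ : ℝ := min r₀ (min ε 1) with hr₁_def
  have hr₁pos : 0 < r₁ := lt_min hr₀pos (lt_min hεpos one_pos)
  have hr₁le1 : r₁ ≤ 1 := le_trans (min_le_right _ _) (min_le_right _ _)
  set K : ℝ := β^2 * (L/2) with hK_def
  have hKpos : 0 < K := by positivity
  -- the key estimate
  have key : ∀ r ∈ Ioo (0:ℝ) r₁,
      ENNReal.ofReal (K / r) ≤
        ENNReal.ofReal (1 / r ^ (d + 1)) *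
          ∫⁻ y in ball x r ∩ Ω,
            ENNReal.ofReal
              ((infDist (y - x) (P : Set (EuclideanSpace ℝ (Fin n))) / r) ^ 2) ∂μ := by
    intro r hr
    have hrpos : 0 < r := hr.1
    have hrne : r ≠ 0 := hrpos.ne'
    have hrε : r < ε := lt_of_lt_of_le hr.2 (le_trans (min_le_right _ _) (min_le_left _ _))
    set ψ : EuclideanSpace ℝ (Fin n) → ℝ := fun y => φ (r⁻¹ • (y - x)) with hψ_def
    have hψc : Continuous ψ :=
      φcont.comp ((continuous_id.sub continuous_const).const_smul r⁻¹)
    have hψ_nonneg : ∀ y, 0 ≤ ψ y := fun y => hφ_nonneg _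
    have hψ_sub : ∀ y : EuclideanSpace ℝ (Fin n), ψ y ≠ 0 →
        ‖y - x‖ < r ∧ β ≤ infDist (r⁻¹ • (y - x)) (P : Set (EuclideanSpace ℝ (Fin n))) := by
      intro y hy
      have hzd : dist (r⁻¹ • (y - x)) v' < 2*ρ := hφ_supp _ hy
      have hn1 : ‖r⁻¹ • (y - x)‖ < 1 := hnorm1 _ hzd
      refine ⟨?_, hfar _ hzd⟩
      have heq : ‖y - x‖ = r * ‖r⁻¹ • (y - x)‖ := by
        rw [norm_smul, Real.norm_eq_abs, abs_of_pos (by positivity)]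
        field_simp
      rw [heq]
      calc r * ‖r⁻¹ • (y - x)‖ < r * 1 := mul_lt_mul_of_pos_left hn1 hrpos
        _ = r := mul_one r
    have hψcs : HasCompactSupport ψ := by
      refine HasCompactSupport.intro (isCompact_closedBall x r) (fun y hy => ?_)
      by_contra h
      refine hy (mem_closedBall.2 ?_)
      rw [dist_eq_norm]
      exact (hψ_sub y h).1.le
    have hψint : Integrable ψ μ := hψc.integrable_of_hasCompactSupport hψcs
    -- growth from tangent
    have hgrow : L/2 * r^d ≤ ∫ y, ψ y ∂μ := by
      have h := hr₀ (Set.mem_Ioo.mpr ⟨hrpos, lt_of_lt_of_le hr.2 (min_le_left _ _)⟩)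
      have hrd : (0:ℝ) < r^d := by positivity
      rw [inv_mul_eq_div, lt_div_iff₀ hrd] at h
      linarith
    -- scaling of infDist
    have hPsmul : r • (P : Set (EuclideanSpace ℝ (Fin n)))
        = (P : Set (EuclideanSpace ℝ (Fin n))) := by
      ext w
      rw [Set.mem_smul_set_iff_inv_smul_mem₀ hrne]
      exact P.smul_mem_iff (inv_ne_zero hrne)
    have hpt : ∀ y : EuclideanSpace ℝ (Fin n), ENNReal.ofReal (β^2 * ψ y) ≤
        ENNReal.ofReal
          ((infDist (y - x) (P : Set (EuclideanSpace ℝ (Fin n))) / r) ^ 2) := by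
      intro y
      by_cases hy : ψ y = 0
      · simp [hy]
      · obtain ⟨-, hβle⟩ := hψ_sub y hy
        have hsc : infDist (y - x) (P : Set (EuclideanSpace ℝ (Fin n)))
            = r * infDist (r⁻¹ • (y - x)) (P : Set (EuclideanSpace ℝ (Fin n))) := by
          conv_lhs => rw [show y - x = r • (r⁻¹ • (y - x)) by rw [smul_smul]; field_simp; rw [one_smul]]
          rw [← hPsmul, infDist_smul₀ hrne, Real.norm_eq_abs, abs_of_pos hrpos, hPsmul]
        refine ENNReal.ofReal_le_ofReal ?_
        have hdiv : infDist (y - x) (P : Set (EuclideanSpace ℝ (Fin n))) / r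
            = infDist (r⁻¹ • (y - x)) (P : Set (EuclideanSpace ℝ (Fin n))) := by
          rw [hsc]; field_simp
        rw [hdiv]
        have h1 : β^2 * ψ y ≤ β^2 * 1 :=
          mul_le_mul_of_nonneg_left (hφ_le_one _) (by positivity)
        have h2 : β^2 ≤ (infDist (r⁻¹ • (y - x)) (P : Set (EuclideanSpace ℝ (Fin n))))^2 :=
          pow_le_pow_left₀ hβpos.le hβle 2
        calc β^2 * ψ y ≤ β^2 * 1 := h1
          _ = β^2 := mul_one _
          _ ≤ _ := h2
    have hsupp2 : (Function.support fun y => ENNReal.ofReal (β^2 * ψ y)) ⊆ ball x r ∩ Ω := by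
      intro y hy
      have hψy : ψ y ≠ 0 := by
        intro h
        apply hy
        simp [h]
      have h1 := (hψ_sub y hψy).1
      have hyball : y ∈ ball x r := by rw [mem_ball, dist_eq_norm]; exact h1
      exact ⟨hyball, hεΩ (mem_ball.2 (lt_trans (mem_ball.1 hyball) hrε))⟩
    -- chain of inequalities
    have hI : ENNReal.ofReal (β^2 * (L/2 * r^d)) ≤
        ∫⁻ y in ball x r ∩ Ω,
          ENNReal.ofReal
            ((infDist (y - x) (P : Set (EuclideanSpace ℝ (Fin n))) / r) ^ 2) ∂μ := by
      calc ENNReal.ofReal (β^2 * (L/2 * r^d))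
          ≤ ENNReal.ofReal (β^2 * ∫ y, ψ y ∂μ) :=
            ENNReal.ofReal_le_ofReal (mul_le_mul_of_nonneg_left hgrow (by positivity))
        _ = ENNReal.ofReal (∫ y, β^2 * ψ y ∂μ) := by rw [integral_const_mul]
        _ = ∫⁻ y, ENNReal.ofReal (β^2 * ψ y) ∂μ :=
            ofReal_integral_eq_lintegral_ofReal (hψint.const_mul _)
              (Eventually.of_forall fun y => by positivity)
        _ = ∫⁻ y in ball x r ∩ Ω, ENNReal.ofReal (β^2 * ψ y) ∂μ :=
            (setLIntegral_eq_of_support_subset hsupp2).symm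
        _ ≤ ∫⁻ y in ball x r ∩ Ω,
              ENNReal.ofReal
                ((infDist (y - x) (P : Set (EuclideanSpace ℝ (Fin n))) / r) ^ 2) ∂μ :=
            lintegral_mono fun y => hpt y
    calc ENNReal.ofReal (K / r)
        = ENNReal.ofReal (1 / r ^ (d+1)) * ENNReal.ofReal (β^2 * (L/2 * r^d)) := by
          rw [← ENNReal.ofReal_mul (by positivity)]
          congr 1
          rw [hK_def]
          field_simp
          ring
      _ ≤ _ := mul_le_mul_right hI _
  -- conclusion
  rw [eq_top_iff]
  calc (⊤ : ℝ≥0∞) = ∫⁻ r in Ioo (0:ℝ) r₁, ENNReal.ofReal (K / r) :=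
        (lintegral_const_div_Ioo_eq_top hr₁pos hKpos).symm
    _ ≤ ∫⁻ r in Ioo (0:ℝ) r₁,
          ENNReal.ofReal (1 / r ^ (d + 1)) *
            ∫⁻ y in ball x r ∩ Ω,
              ENNReal.ofReal
                ((infDist (y - x) (P : Set (EuclideanSpace ℝ (Fin n))) / r) ^ 2) ∂μ := by
        refine lintegral_mono_ae ?_
        rw [ae_restrict_iff' measurableSet_Ioo]
        exact Eventually.of_forall key
    _ ≤ E0 d Ω μ x P := by
        unfold E0
        exact lintegral_mono' (Measure.restrict_mono (Ioo_subset_Ioo le_rfl hr₁le1) le_rfl) le_rfl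
end

section
/- Let (μ_i) be positive Radon measures on an open set Ω ⊆ ℝⁿ converging weakly-* to μ. Assume there exist 0 < C₁ < C₂ and a positive decreasing sequence β_i ↓ 0 such that for μ_i-a.e. x ∈ Ω and every r with β_i < r < d(x, Ωᶜ), one has C₁rᵈ ≤ μ_i(B_r(x)) ≤ C₂rᵈ. Then for μ-a.e. x ∈ Ω and every 0 < r < d(x, Ωᶜ), C₁rᵈ ≤ μ(B_r(x)) ≤ C₂rᵈ. -/
open MeasureTheory Metric Set Filter
open scoped ENNReal Topology

/-- Weak-* convergence of Radon measures on an open set `Ω`. -/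
def WeakStarTendsto {n : ℕ} (μi : ℕ → Measure (EuclideanSpace ℝ (Fin n)))
    (μ : Measure (EuclideanSpace ℝ (Fin n))) (Ω : Set (EuclideanSpace ℝ (Fin n))) : Prop :=
  ∀ φ : EuclideanSpace ℝ (Fin n) → ℝ, Continuous φ → HasCompactSupport φ → tsupport φ ⊆ Ω →
    Tendsto (fun i => ∫ y, φ y ∂(μi i)) atTop (𝓝 (∫ y, φ y ∂μ))


section Aux
variable {n : ℕ} {Ω : Set (EuclideanSpace ℝ (Fin n))}
  {μi : ℕ → Measure (EuclideanSpace ℝ (Fin n))} {μ : Measure (EuclideanSpace ℝ (Fin n))}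

/-- Almost every point is in the support of the measure. -/
lemma aux_ae_ball_pos (μ : Measure (EuclideanSpace ℝ (Fin n))) :
    ∀ᵐ x ∂μ, ∀ ε : ℝ, 0 < ε → 0 < μ (ball x ε) := by
  rw [ae_iff]
  apply measure_null_of_locally_null
  intro x hx
  push_neg at hx
  obtain ⟨ε, hε, h0⟩ := hx
  have : μ (ball x ε) = 0 := le_antisymm (not_lt.mp (fun h => h0.not_gt h)) zero_le
  exact ⟨ball x ε, mem_nhdsWithin_of_mem_nhds (ball_mem_nhds x hε), this⟩

/-- lintegral of a `[0,1]`-valued function supported in `V` is at most `ν V`. -/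
lemma aux_lint_le (ν : Measure (EuclideanSpace ℝ (Fin n))) {f : EuclideanSpace ℝ (Fin n) → ℝ}
    (hf01 : ∀ x, f x ∈ Icc (0:ℝ) 1) {V : Set (EuclideanSpace ℝ (Fin n))}
    (hV : MeasurableSet V) (hfV : tsupport f ⊆ V) :
    ∫⁻ y, ENNReal.ofReal (f y) ∂ν ≤ ν V := by
  calc ∫⁻ y, ENNReal.ofReal (f y) ∂ν ≤ ∫⁻ y, V.indicator 1 y ∂ν := by
        apply lintegral_mono
        intro y
        by_cases hy : y ∈ V
        · simp only [indicator_of_mem hy, Pi.one_apply]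
          exact ENNReal.ofReal_le_one.mpr (hf01 y).2
        · have : f y = 0 := image_eq_zero_of_notMem_tsupport (fun h => hy (hfV h))
          simp [indicator_of_notMem hy, this]
    _ = ν V := lintegral_indicator_one hV

/-- `ν K` is at most the lintegral of a nonneg function that is `1` on `K`. -/
lemma aux_le_lint (ν : Measure (EuclideanSpace ℝ (Fin n))) {f : EuclideanSpace ℝ (Fin n) → ℝ}
    (hf0 : ∀ x, 0 ≤ f x) {K : Set (EuclideanSpace ℝ (Fin n))}
    (hK : MeasurableSet K) (hf1 : EqOn f 1 K) :
    ν K ≤ ∫⁻ y, ENNReal.ofReal (f y) ∂ν := by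
  calc ν K = ∫⁻ y, K.indicator 1 y ∂ν := (lintegral_indicator_one hK).symm
    _ ≤ ∫⁻ y, ENNReal.ofReal (f y) ∂ν := by
        apply lintegral_mono
        intro y
        by_cases hy : y ∈ K
        · simp [indicator_of_mem hy, hf1 hy]
        · simp [indicator_of_notMem hy]

lemma aux_tendsto_lint [∀ i, IsFiniteMeasureOnCompacts (μi i)] [IsFiniteMeasureOnCompacts μ]
    (hw : WeakStarTendsto μi μ Ω) {f : EuclideanSpace ℝ (Fin n) → ℝ} (hf : Continuous f)
    (hfc : HasCompactSupport f) (hfΩ : tsupport f ⊆ Ω) (hf0 : ∀ x, 0 ≤ f x) :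
    Tendsto (fun i => ∫⁻ y, ENNReal.ofReal (f y) ∂(μi i)) atTop
      (𝓝 (∫⁻ y, ENNReal.ofReal (f y) ∂μ)) := by
  have key : ∀ (ν : Measure (EuclideanSpace ℝ (Fin n))) [IsFiniteMeasureOnCompacts ν],
      ∫⁻ y, ENNReal.ofReal (f y) ∂ν = ENNReal.ofReal (∫ y, f y ∂ν) := by
    intro ν _
    exact (ofReal_integral_eq_lintegral_ofReal (hf.integrable_of_hasCompactSupport hfc)
      (Eventually.of_forall hf0)).symm
  simp only [key]
  exact (ENNReal.continuous_ofReal.tendsto _).comp (hw f hf hfc hfΩ)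

/-- Good test functions for a compact set inside an open set. -/
lemma aux_testfun {K U : Set (EuclideanSpace ℝ (Fin n))} (hK : IsCompact K) (hU : IsOpen U)
    (hKU : K ⊆ U) :
    ∃ f : EuclideanSpace ℝ (Fin n) → ℝ, Continuous f ∧ HasCompactSupport f ∧
      tsupport f ⊆ U ∧ EqOn f 1 K ∧ ∀ x, f x ∈ Icc (0:ℝ) 1 := by
  obtain ⟨L, hLc, hKL, hLU⟩ := exists_compact_between hK hU hKU
  obtain ⟨f, hf1, hf0, hfc, hf01⟩ := exists_continuous_one_zero_of_isCompact hK
    isOpen_interior.isClosed_compl (disjoint_compl_right_iff_subset.mpr hKL)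
  refine ⟨f, f.continuous, hfc, ?_, hf1, hf01⟩
  have hsupp : Function.support f ⊆ interior L := by
    intro x hx
    by_contra hxL
    exact hx (hf0 hxL)
  exact (closure_mono hsupp).trans
    ((closure_minimal interior_subset hLc.isClosed).trans hLU)

/-- upper semicontinuity on compact subsets of `Ω`. -/
lemma aux_upper (hΩ : IsOpen Ω) [∀ i, IsFiniteMeasureOnCompacts (μi i)]
    [IsFiniteMeasureOnCompacts μ] (hw : WeakStarTendsto μi μ Ω)
    {K : Set (EuclideanSpace ℝ (Fin n))} (hK : IsCompact K) (hKΩ : K ⊆ Ω)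
    {c : ℝ≥0∞} (hc : μ K < c) : ∀ᶠ i in atTop, μi i K ≤ c := by
  obtain ⟨V, hKV, hVopen, hVc⟩ := Set.exists_isOpen_lt_of_lt K c hc
  obtain ⟨f, hfcont, hfc, hfsupp, hf1, hf01⟩ :=
    aux_testfun hK (hVopen.inter hΩ) (subset_inter hKV hKΩ)
  have hlim := aux_tendsto_lint hw hfcont hfc (hfsupp.trans inter_subset_right)
    (fun x => (hf01 x).1)
  have hle : ∫⁻ y, ENNReal.ofReal (f y) ∂μ < c :=
    lt_of_le_of_lt (aux_lint_le μ hf01 hVopen.measurableSet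
      (hfsupp.trans inter_subset_left)) hVc
  filter_upwards [hlim.eventually_lt_const hle] with i hi
  exact le_of_lt (lt_of_le_of_lt (aux_le_lint (μi i) (fun x => (hf01 x).1)
    hK.measurableSet hf1) hi)

/-- lower semicontinuity on open subsets of `Ω`. -/
lemma aux_lower (hΩ : IsOpen Ω) [∀ i, IsFiniteMeasureOnCompacts (μi i)]
    [IsFiniteMeasureOnCompacts μ] (hw : WeakStarTendsto μi μ Ω)
    {U : Set (EuclideanSpace ℝ (Fin n))} (hU : IsOpen U) (hUΩ : U ⊆ Ω)
    {c : ℝ≥0∞} (hc : c < μ U) : ∀ᶠ i in atTop, c < μi i U := by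
  obtain ⟨K, hKU, hKc, hcK⟩ := Measure.Regular.innerRegular hU c hc
  obtain ⟨f, hfcont, hfc, hfsupp, hf1, hf01⟩ := aux_testfun hKc hU hKU
  have hlim := aux_tendsto_lint hw hfcont hfc (hfsupp.trans hUΩ) (fun x => (hf01 x).1)
  have hgt : c < ∫⁻ y, ENNReal.ofReal (f y) ∂μ :=
    lt_of_lt_of_le hcK (aux_le_lint μ (fun x => (hf01 x).1) hKc.measurableSet hf1)
  filter_upwards [hlim.eventually_const_lt hgt] with i hi
  exact lt_of_lt_of_le hi (aux_lint_le (μi i) hf01 hU.measurableSet hfsupp)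

lemma aux_core {d : ℕ} (hΩ : IsOpen Ω) [∀ i, IsFiniteMeasureOnCompacts (μi i)]
    [IsFiniteMeasureOnCompacts μ] (hw : WeakStarTendsto μi μ Ω)
    {C₁ C₂ : ℝ} (hC₂ : 0 < C₂) {β : ℕ → ℝ} (hβlim : Tendsto β atTop (𝓝 0))
    (hdens : ∀ i, ∀ᵐ y ∂(μi i), y ∈ Ω → ∀ ρ : ℝ, β i < ρ → ρ < Metric.infDist y Ωᶜ →
      ENNReal.ofReal (C₁ * ρ ^ d) ≤ μi i (Metric.ball y ρ) ∧
      μi i (Metric.ball y ρ) ≤ ENNReal.ofReal (C₂ * ρ ^ d))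
    {x : EuclideanSpace ℝ (Fin n)} (hxS : ∀ ε : ℝ, 0 < ε → 0 < μ (ball x ε))
    {r : ℝ} (hr : 0 < r) (hrD : r < Metric.infDist x Ωᶜ)
    {s t : ℝ} (hs : 0 < s) (hst : s < t) (htr : t < r) :
    ENNReal.ofReal (C₁ * s ^ d) ≤ μ (ball x r) ∧
      μ (ball x s) ≤ ENNReal.ofReal (C₂ * r ^ d) := by
  have memΩ : ∀ z : EuclideanSpace ℝ (Fin n), dist z x < Metric.infDist x Ωᶜ → z ∈ Ω := by
    intro z hz
    by_contra h
    have : Metric.infDist x Ωᶜ ≤ dist x z := Metric.infDist_le_dist_of_mem (show z ∈ Ωᶜ from h)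
    rw [dist_comm] at this
    linarith
  set ε : ℝ := min ((t - s) / 2) ((r - t) / 2) with hεdef
  have hε : 0 < ε := lt_min (by linarith) (by linarith)
  have hε1 : ε ≤ (t - s) / 2 := min_le_left _ _
  have hε2 : ε ≤ (r - t) / 2 := min_le_right _ _
  have hballεΩ : ball x ε ⊆ Ω := fun z hz => memΩ z (by
    have := mem_ball.mp hz; linarith)
  have hballsΩ : ball x s ⊆ Ω := fun z hz => memΩ z (by
    have := mem_ball.mp hz; linarith)
  have hclosedt : closedBall x t ⊆ Ω := fun z hz => memΩ z (by
    have := mem_closedBall.mp hz; linarith)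
  have hfin : μ (ball x r) ≠ ⊤ :=
    ((measure_mono ball_subset_closedBall).trans_lt
      (isCompact_closedBall x r).measure_lt_top).ne
  have ev1 : ∀ᶠ i in atTop, β i < s := hβlim.eventually_lt_const hs
  have ev2 : ∀ᶠ i in atTop, 0 < μi i (ball x ε) :=
    aux_lower hΩ hw isOpen_ball hballεΩ (hxS ε hε)
  -- the key estimate for a single index `i`
  have hyex : ∀ i : ℕ, β i < s → 0 < μi i (ball x ε) →
      ENNReal.ofReal (C₁ * s ^ d) ≤ μi i (closedBall x t) ∧
      μi i (ball x s) ≤ ENNReal.ofReal (C₂ * r ^ d) := by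
    intro i hβi hpos
    have h0 : μi i {y | ¬ (y ∈ Ω → ∀ ρ : ℝ, β i < ρ → ρ < Metric.infDist y Ωᶜ →
        ENNReal.ofReal (C₁ * ρ ^ d) ≤ μi i (Metric.ball y ρ) ∧
        μi i (Metric.ball y ρ) ≤ ENNReal.ofReal (C₂ * ρ ^ d))} = 0 := ae_iff.mp (hdens i)
    have h0' : μi i ({y | y ∈ Ω → ∀ ρ : ℝ, β i < ρ → ρ < Metric.infDist y Ωᶜ →
        ENNReal.ofReal (C₁ * ρ ^ d) ≤ μi i (Metric.ball y ρ) ∧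
        μi i (Metric.ball y ρ) ≤ ENNReal.ofReal (C₂ * ρ ^ d)})ᶜ = 0 := by
      rw [compl_setOf]; exact h0
    have hne : (ball x ε ∩ {y | y ∈ Ω → ∀ ρ : ℝ, β i < ρ → ρ < Metric.infDist y Ωᶜ →
        ENNReal.ofReal (C₁ * ρ ^ d) ≤ μi i (Metric.ball y ρ) ∧
        μi i (Metric.ball y ρ) ≤ ENNReal.ofReal (C₂ * ρ ^ d)}).Nonempty := by
      apply nonempty_of_measure_ne_zero (μ := μi i)
      rw [measure_inter_conull h0']
      exact hpos.ne'
    obtain ⟨y, hyball, hyP⟩ := hne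
    have hyΩ : y ∈ Ω := hballεΩ hyball
    have hdyx : dist y x < ε := mem_ball.mp hyball
    have hDy : r - ε < Metric.infDist y Ωᶜ := by
      have h := Metric.infDist_le_infDist_add_dist (x := x) (y := y) (s := Ωᶜ)
      rw [dist_comm] at h
      linarith
    constructor
    · have hl := (hyP hyΩ s hβi (by linarith)).1
      have hsub1 : ball y s ⊆ closedBall x t := by
        intro z hz
        rw [mem_closedBall]
        have h1 := mem_ball.mp hz
        have h2 := dist_triangle z y x
        linarith
      exact hl.trans (measure_mono hsub1)
    · have hu := (hyP hyΩ (s + ε) (by linarith) (by linarith)).2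
      have hsub2 : ball x s ⊆ ball y (s + ε) := by
        intro z hz
        rw [mem_ball]
        have h1 := mem_ball.mp hz
        have h2 := dist_triangle z x y
        rw [dist_comm x y] at h2
        linarith
      have hbound : ENNReal.ofReal (C₂ * (s + ε) ^ d) ≤ ENNReal.ofReal (C₂ * r ^ d) :=
        ENNReal.ofReal_le_ofReal (mul_le_mul_of_nonneg_left
          (pow_le_pow_left₀ (by linarith) (by linarith) d) hC₂.le)
      exact (measure_mono hsub2).trans (hu.trans hbound)
  constructor
  · apply ENNReal.le_of_forall_pos_le_add
    intro ε' hε' _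
    have hlt : μ (closedBall x t) < μ (ball x r) + ε' := by
      refine (measure_mono (closedBall_subset_ball htr)).trans_lt ?_
      exact ENNReal.lt_add_right hfin (by exact_mod_cast hε'.ne')
    have ev3 := aux_upper hΩ hw (isCompact_closedBall x t) hclosedt hlt
    obtain ⟨i, h1, h2, h3⟩ := (ev1.and (ev2.and ev3)).exists
    exact ((hyex i h1 h2).1).trans h3
  · by_contra hcon
    push_neg at hcon
    have ev3 := aux_lower hΩ hw isOpen_ball hballsΩ hcon
    obtain ⟨i, h1, h2, h3⟩ := (ev1.and (ev2.and ev3)).exists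
    exact absurd (hyex i h1 h2).2 (not_le.mpr h3)

end Aux

/-- If `μ_i ⇀* μ` on an open set `Ω` and each `μ_i` satisfies the density
estimates `C₁rᵈ ≤ μ_i(B_r(x)) ≤ C₂rᵈ` for `μ_i`-a.e. `x ∈ Ω` and all `β_i < r < d(x,Ωᶜ)`,
where `β_i ↓ 0`, then `μ` satisfies `C₁rᵈ ≤ μ(B_r(x)) ≤ C₂rᵈ` for `μ`-a.e. `x ∈ Ω` and all
`0 < r < d(x,Ωᶜ)`. -/
theorem density_estimates_pass_to_limit {n d : ℕ}
    (Ω : Set (EuclideanSpace ℝ (Fin n))) (hΩ : IsOpen Ω)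
    (μi : ℕ → Measure (EuclideanSpace ℝ (Fin n))) (μ : Measure (EuclideanSpace ℝ (Fin n)))
    [∀ i, IsFiniteMeasureOnCompacts (μi i)] [IsFiniteMeasureOnCompacts μ]
    (hw : WeakStarTendsto μi μ Ω)
    (C₁ C₂ : ℝ) (hC₁ : 0 < C₁) (hC₁₂ : C₁ < C₂)
    (β : ℕ → ℝ) (hβpos : ∀ i, 0 < β i) (hβmono : Antitone β)
    (hβlim : Tendsto β atTop (𝓝 0))
    (hdens : ∀ i, ∀ᵐ x ∂(μi i), x ∈ Ω → ∀ r : ℝ, β i < r → r < Metric.infDist x Ωᶜ →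
      ENNReal.ofReal (C₁ * r ^ d) ≤ μi i (Metric.ball x r) ∧
      μi i (Metric.ball x r) ≤ ENNReal.ofReal (C₂ * r ^ d)) :
    ∀ᵐ x ∂μ, x ∈ Ω → ∀ r : ℝ, 0 < r → r < Metric.infDist x Ωᶜ →
      ENNReal.ofReal (C₁ * r ^ d) ≤ μ (Metric.ball x r) ∧
      μ (Metric.ball x r) ≤ ENNReal.ofReal (C₂ * r ^ d) := by
  have hC₂ : 0 < C₂ := hC₁.trans hC₁₂
  filter_upwards [aux_ae_ball_pos μ] with x hxS
  intro hxΩ r hr hrD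
  constructor
  · -- lower bound
    have htends : Tendsto (fun s : ℝ => ENNReal.ofReal (C₁ * s ^ d)) (𝓝[<] r)
        (𝓝 (ENNReal.ofReal (C₁ * r ^ d))) :=
      ((ENNReal.continuous_ofReal.comp (continuous_const.mul (continuous_pow d))).tendsto
        r).mono_left nhdsWithin_le_nhds
    refine le_of_tendsto htends ?_
    filter_upwards [Ioo_mem_nhdsLT_of_mem (⟨hr, le_refl r⟩ : r ∈ Ioc 0 r)] with s hsIoo
    exact (aux_core hΩ hw hC₂ hβlim hdens hxS hr hrD hsIoo.1
      (show s < (s + r) / 2 by linarith [hsIoo.2]) (by linarith [hsIoo.2])).1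
  · -- upper bound
    have humono : Monotone fun k : ℕ => ball x (r - r / (k + 1)) := by
      intro a b hab
      apply ball_subset_ball
      have h1 : (a : ℝ) + 1 ≤ (b : ℝ) + 1 := by exact_mod_cast Nat.succ_le_succ hab
      have h2 : r / ((b : ℝ) + 1) ≤ r / ((a : ℝ) + 1) := by
        gcongr
      linarith
    have hunion : (⋃ k : ℕ, ball x (r - r / (k + 1))) = ball x r := by
      apply Subset.antisymm
      · refine iUnion_subset fun k => ball_subset_ball ?_
        have : 0 < r / ((k : ℝ) + 1) := by positivity
        linarith
      · intro z hz
        have hdz : dist z x < r := mem_ball.mp hz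
        obtain ⟨k, hk⟩ := exists_nat_one_div_lt (div_pos (sub_pos.mpr hdz) hr)
        refine mem_iUnion.mpr ⟨k, mem_ball.mpr ?_⟩
        have h2 : r * (1 / ((k : ℝ) + 1)) < r * ((r - dist z x) / r) :=
          mul_lt_mul_of_pos_left hk hr
        have h3 : r * ((r - dist z x) / r) = r - dist z x := by field_simp
        have h4 : r / ((k : ℝ) + 1) = r * (1 / ((k : ℝ) + 1)) := by ring
        linarith
    have htend := tendsto_measure_iUnion_atTop (μ := μ) humono
    rw [hunion] at htend
    refine le_of_tendsto htend (Eventually.of_forall fun k => ?_)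
    simp only [Function.comp_apply]
    by_cases hk : 0 < r - r / ((k : ℝ) + 1)
    · have hkr : r - r / ((k : ℝ) + 1) < r := by
        have : 0 < r / ((k : ℝ) + 1) := by positivity
        linarith
      exact (aux_core hΩ hw hC₂ hβlim hdens hxS hr hrD hk
        (show r - r / ((k : ℝ) + 1) < ((r - r / ((k : ℝ) + 1)) + r) / 2 by linarith)
        (by linarith)).2
    · have : ball x (r - r / ((k : ℝ) + 1)) = ∅ := ball_eq_empty.mpr (not_lt.mp hk)
      rw [this]
      simp
end

section
/- Let Ω ⊆ ℝⁿ be open, (μ_i) Radon measures converging weakly-* to μ with sup_i μ_i(Ω) < ∞, and ω ⊂⊂ Ω open with μ(∂ω) = 0. For Radon measures ν, λ define Δ(ν,λ) = sup over φ ∈ Lip_k(ω) with ‖φ‖_∞ ≤ C and over x ∈ ω̄ of ∫₀^{d(ω̄,Ωᶜ)/2} |∫_{B_r(x)∩ω} φ dν − ∫_{B_r(x)∩ω} φ dλ| dr. Then Δ(μ_i, μ) → 0 as i → ∞ for any fixed k, C ≥ 0. -/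
open MeasureTheory Metric Set Filter
open scoped ENNReal Topology NNReal

/-- The distance `d(ω̄, Ωᶜ)` from the (compact) closure of `ω` to the complement of `Ω`. -/
noncomputable def setDistToCompl {n : ℕ} (ω Ω : Set (EuclideanSpace ℝ (Fin n))) : ℝ :=
  sInf ((fun x => Metric.infDist x Ωᶜ) '' closure ω)

/-- An explicit continuous cutoff: `1` on `s`, supported in `thickening t s`. -/
lemma exists_cutoff {n : ℕ} (s : Set (EuclideanSpace ℝ (Fin n))) (hs : IsCompact s)
    (hne : s.Nonempty) {t : ℝ} (ht : 0 < t) :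
    ∃ g : EuclideanSpace ℝ (Fin n) → ℝ, Continuous g ∧ HasCompactSupport g ∧
      tsupport g ⊆ cthickening t s ∧ EqOn g 1 s ∧ (∀ y, g y ∈ Icc (0:ℝ) 1) ∧
      Function.support g ⊆ thickening t s := by
  have hsupp : Function.support (fun y => max (1 - infDist y s / t) 0) ⊆ thickening t s := by
    intro y hy
    simp only [Function.mem_support, ne_eq, max_eq_right_iff, not_le] at hy
    have hlt : infDist y s / t < 1 := by linarith
    have : infDist y s < t := (div_lt_one ht).1 hlt
    exact (mem_thickening_iff_infDist_lt hne).2 this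
  have htsupp : tsupport (fun y => max (1 - infDist y s / t) 0) ⊆ cthickening t s :=
    closure_minimal (hsupp.trans (thickening_subset_cthickening t s)) isClosed_cthickening
  refine ⟨fun y => max (1 - infDist y s / t) 0,
    ((continuous_const.sub ((continuous_infDist_pt s).div_const t)).max continuous_const),
    IsCompact.of_isClosed_subset (hs.cthickening) isClosed_closure htsupp, htsupp, ?_, ?_, hsupp⟩
  · intro y hy
    simp [infDist_zero_of_mem hy]
  · intro y
    constructor
    · exact le_max_right _ _
    · have h0 : 0 ≤ infDist y s / t := div_nonneg infDist_nonneg ht.le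
      rw [max_le_iff]; constructor <;> [linarith; linarith]

/-- Bounded measurable functions are integrable on subsets of a compact set w.r.t. a measure
finite on compacts. -/
lemma integrableOn_of_subset_compact {n : ℕ} {ν : Measure (EuclideanSpace ℝ (Fin n))}
    {K s : Set (EuclideanSpace ℝ (Fin n))} (hK : IsCompact K) (hs : s ⊆ K)
    [IsFiniteMeasureOnCompacts ν] {ψ : EuclideanSpace ℝ (Fin n) → ℝ}
    (hψ : AEStronglyMeasurable ψ ν) {C : ℝ} (hb : ∀ y, |ψ y| ≤ C) : IntegrableOn ψ s ν :=
  Measure.integrableOn_of_bounded (ne_top_of_le_ne_top hK.measure_lt_top.ne (measure_mono hs))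
    hψ (ae_of_all _ fun y => by simpa using hb y)

lemma auxC {C : ℝ} (hC : 0 ≤ C) {ε : ℝ} (hε : 0 < ε) : C * (ε / (4 * (C + 1))) ≤ ε / 4 := by
  have h : C * (ε / (4 * (C + 1))) = ε / 4 * (C / (C+1)) := by field_simp
  rw [h]
  have h2 : C / (C+1) ≤ 1 := by rw [div_le_one (by linarith)]; linarith
  nlinarith

lemma portmanteau_setIntegral {n : ℕ}
    {Ω : Set (EuclideanSpace ℝ (Fin n))} (hΩ : IsOpen Ω)
    {μi : ℕ → Measure (EuclideanSpace ℝ (Fin n))} {μ : Measure (EuclideanSpace ℝ (Fin n))}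
    [∀ i, IsFiniteMeasureOnCompacts (μi i)] [IsFiniteMeasureOnCompacts μ]
    (hw : WeakStarTendsto μi μ Ω)
    {A : Set (EuclideanSpace ℝ (Fin n))} (hA : MeasurableSet A)
    (hAc : IsCompact (closure A)) (hAΩ : closure A ⊆ Ω) (hfr : μ (frontier A) = 0)
    {ψ : EuclideanSpace ℝ (Fin n) → ℝ} (hψ : Continuous ψ) {C : ℝ}
    (hψ0 : ∀ y, 0 ≤ ψ y) (hψC : ∀ y, ψ y ≤ C) :
    Tendsto (fun i => ∫ y in A, ψ y ∂(μi i)) atTop (𝓝 (∫ y in A, ψ y ∂μ)) := by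
  rcases A.eq_empty_or_nonempty with rfl | hAne
  · simpa using tendsto_const_nhds
  have hC : 0 ≤ C := le_trans (hψ0 0) (hψC 0)
  have hψb : ∀ y, |ψ y| ≤ C := fun y => abs_le.2 ⟨by linarith [hψ0 y], hψC y⟩
  have hμA : μ (closure A) ≠ ⊤ := hAc.measure_lt_top.ne
  have hfr_sub1 : closure A \ A ⊆ frontier A := by
    intro y hy
    rw [frontier, mem_diff]
    exact ⟨hy.1, fun h => hy.2 (interior_subset h)⟩
  have hfr_sub2 : A \ interior A ⊆ frontier A := by
    intro y hy
    rw [frontier, mem_diff]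
    exact ⟨subset_closure hy.1, hy.2⟩
  have haeU : A =ᵐ[μ] closure A := by
    rw [ae_eq_set]
    refine ⟨?_, measure_mono_null hfr_sub1 hfr⟩
    rw [diff_eq_empty.2 subset_closure]
    exact measure_empty
  have haeI : A =ᵐ[μ] interior A := by
    rw [ae_eq_set]
    refine ⟨measure_mono_null hfr_sub2 hfr, ?_⟩
    rw [diff_eq_empty.2 interior_subset]
    exact measure_empty
  have hintA : ∀ (ν : Measure (EuclideanSpace ℝ (Fin n))) [IsFiniteMeasureOnCompacts ν],
      IntegrableOn ψ A ν := fun ν _ =>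
    integrableOn_of_subset_compact hAc subset_closure hψ.aestronglyMeasurable hψb
  rw [Metric.tendsto_atTop]
  intro ε hε
  set δ' : ℝ≥0∞ := ENNReal.ofReal (ε / (4 * (C + 1))) with hδ'def
  have hδ'pos : δ' ≠ 0 := by
    simp only [hδ'def, ne_eq, ENNReal.ofReal_eq_zero, not_le]
    positivity
  have hδ'top : δ' ≠ ⊤ := ENNReal.ofReal_ne_top
  have htoReal : ∀ s : Set (EuclideanSpace ℝ (Fin n)), μ s ≤ δ' → C * (μ s).toReal ≤ ε / 4 := by
    intro s hs
    have h1 : (μ s).toReal ≤ ε / (4 * (C + 1)) := by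
      have := ENNReal.toReal_mono hδ'top hs
      rwa [ENNReal.toReal_ofReal (by positivity)] at this
    calc C * (μ s).toReal ≤ C * (ε / (4 * (C + 1))) := by
          apply mul_le_mul_of_nonneg_left h1 hC
      _ ≤ ε / 4 := auxC hC hε
  -- UPPER BOUND construction
  obtain ⟨t₁, ht₁, hsub₁⟩ := hAc.exists_cthickening_subset_open hΩ hAΩ
  have hthick : Tendsto (fun r => μ (cthickening r (closure A))) (𝓝 0) (𝓝 (μ (closure A))) :=
    tendsto_measure_cthickening_of_isClosed
      ⟨t₁, ht₁, (hAc.cthickening).measure_lt_top.ne⟩ isClosed_closure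
  have hev : ∀ᶠ r in 𝓝[>] (0:ℝ), μ (cthickening r (closure A)) < μ (closure A) + δ' :=
    ((hthick.eventually_lt_const (ENNReal.lt_add_right hμA hδ'pos)).filter_mono
      nhdsWithin_le_nhds)
  have hev2 : ∀ᶠ r in 𝓝[>] (0:ℝ), r ∈ Ioo (0:ℝ) t₁ :=
    Ioo_mem_nhdsGT_of_mem ⟨le_refl 0, ht₁⟩
  obtain ⟨t, htm, ht0t⟩ := (hev.and hev2).exists
  obtain ⟨ht0, htt₁⟩ := ht0t
  obtain ⟨g, hgc, hgcs, hgts, hg1, hg01, hgsupp⟩ :=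
    exists_cutoff (closure A) hAc hAne.closure ht0
  set D := cthickening t (closure A) with hDdef
  have hDc : IsCompact D := hAc.cthickening
  have hDm : MeasurableSet D := isClosed_cthickening.measurableSet
  have hAD : closure A ⊆ D := self_subset_cthickening _
  have hφc : Continuous fun y => ψ y * g y := hψ.mul hgc
  have hφcs : HasCompactSupport fun y => ψ y * g y := hgcs.mul_left
  have hφΩ : tsupport (fun y => ψ y * g y) ⊆ Ω :=
    (tsupport_mul_subset_right (f := ψ) (g := g)).trans
      (hgts.trans ((cthickening_mono htt₁.le _).trans hsub₁))
  have hconv := hw _ hφc hφcs hφΩ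
  have hintD : IntegrableOn ψ D μ :=
    integrableOn_of_subset_compact hDc subset_rfl hψ.aestronglyMeasurable hψb
  have hintDg : IntegrableOn (fun y => ψ y * g y) D μ :=
    (hφc.integrable_of_hasCompactSupport hφcs).integrableOn
  have key_upper : (∫ y, ψ y * g y ∂μ) ≤ (∫ y in A, ψ y ∂μ) + ε / 4 := by
    have e1 : (∫ y, ψ y * g y ∂μ) = ∫ y in D, ψ y * g y ∂μ := by
      refine (setIntegral_eq_integral_of_forall_compl_eq_zero fun y hy => ?_).symm
      have hg0 : g y = 0 := by
        by_contra h
        exact hy (thickening_subset_cthickening _ _ (hgsupp h))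
      rw [hg0, mul_zero]
    have e2 : (∫ y in D, ψ y * g y ∂μ) ≤ ∫ y in D, ψ y ∂μ := by
      refine setIntegral_mono_on hintDg hintD hDm fun y hy => ?_
      calc ψ y * g y ≤ ψ y * 1 := mul_le_mul_of_nonneg_left (hg01 y).2 (hψ0 y)
        _ = ψ y := mul_one _
    have e3 : (∫ y in D, ψ y ∂μ)
        = (∫ y in closure A, ψ y ∂μ) + ∫ y in D \ closure A, ψ y ∂μ := by
      conv_lhs => rw [show D = closure A ∪ (D \ closure A) from (union_diff_cancel hAD).symm]
      exact setIntegral_union disjoint_sdiff_self_right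
        (hDm.diff isClosed_closure.measurableSet) (hintD.mono_set hAD)
        (hintD.mono_set diff_subset)
    have e4 : (∫ y in D \ closure A, ψ y ∂μ) ≤ ε / 4 := by
      have hb := norm_setIntegral_le_of_norm_le_const (μ := μ) (s := D \ closure A) (f := ψ)
        (lt_of_le_of_lt (measure_mono diff_subset) hDc.measure_lt_top)
        (fun y _ => by simpa using hψb y)
      have hmeas : μ (D \ closure A) ≤ δ' := by
        rw [measure_diff hAD isClosed_closure.measurableSet.nullMeasurableSet hμA]
        exact tsub_le_iff_right.2 (by rw [add_comm]; exact htm.le)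
      calc (∫ y in D \ closure A, ψ y ∂μ) ≤ ‖∫ y in D \ closure A, ψ y ∂μ‖ := le_abs_self _
        _ ≤ C * (μ (D \ closure A)).toReal := hb
        _ ≤ ε / 4 := by
            calc C * (μ (D \ closure A)).toReal ≤ C * δ'.toReal := by
                  apply mul_le_mul_of_nonneg_left (ENNReal.toReal_mono hδ'top hmeas) hC
              _ ≤ ε / 4 := by
                  rw [hδ'def, ENNReal.toReal_ofReal (by positivity)]
                  exact auxC hC hε
    have e5 : (∫ y in closure A, ψ y ∂μ) = ∫ y in A, ψ y ∂μ :=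
      (setIntegral_congr_set haeU).symm
    rw [e1]
    linarith
  have hup : ∀ᶠ i in atTop, (∫ y in A, ψ y ∂μi i) ≤ (∫ y in A, ψ y ∂μ) + ε / 2 := by
    have h2 : ∀ᶠ i in atTop, (∫ y, ψ y * g y ∂μi i) < (∫ y, ψ y * g y ∂μ) + ε / 4 :=
      hconv.eventually_lt_const (by linarith)
    filter_upwards [h2] with i hi
    have h1 : (∫ y in A, ψ y ∂μi i) ≤ ∫ y, ψ y * g y ∂μi i := by
      rw [← integral_indicator hA]
      refine integral_mono ((hintA (μi i)).integrable_indicator hA)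
        (hφc.integrable_of_hasCompactSupport hφcs) fun y => ?_
      by_cases hy : y ∈ A
      · rw [indicator_of_mem hy]
        have : g y = 1 := hg1 (subset_closure hy)
        rw [this, mul_one]
      · rw [indicator_of_notMem hy]
        exact mul_nonneg (hψ0 y) (hg01 y).1
    linarith
  -- LOWER BOUND construction
  have hU : IsOpen (interior A) := isOpen_interior
  have hμU : μ (interior A) ≠ ⊤ :=
    ne_top_of_le_ne_top hμA (measure_mono (interior_subset.trans subset_closure))
  have e5I : (∫ y in interior A, ψ y ∂μ) = ∫ y in A, ψ y ∂μ :=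
    (setIntegral_congr_set haeI).symm
  obtain ⟨K, hKU, hKc, hKsmall⟩ := hU.measurableSet.exists_isCompact_diff_lt hμU hδ'pos
  have hUsub : interior A ⊆ closure A := interior_subset.trans subset_closure
  have hintU : IntegrableOn ψ (interior A) μ :=
    integrableOn_of_subset_compact hAc hUsub hψ.aestronglyMeasurable hψb
  have hlow : ∀ᶠ i in atTop, (∫ y in A, ψ y ∂μ) - ε / 2 ≤ ∫ y in A, ψ y ∂μi i := by
    rcases K.eq_empty_or_nonempty with rfl | hKne
    · -- μ (interior A) is tiny
      have hμU' : μ (interior A) ≤ δ' := by simpa using hKsmall.le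
      have hsmall : (∫ y in A, ψ y ∂μ) ≤ ε / 4 := by
        rw [← e5I]
        calc (∫ y in interior A, ψ y ∂μ) ≤ ‖∫ y in interior A, ψ y ∂μ‖ := le_abs_self _
          _ ≤ C * (μ (interior A)).toReal :=
              norm_setIntegral_le_of_norm_le_const (f := ψ)
                (lt_of_le_of_lt (measure_mono hUsub) hAc.measure_lt_top)
                (fun y _ => by simpa using hψb y)
          _ ≤ ε / 4 := htoReal _ hμU'
      filter_upwards with i
      have : 0 ≤ ∫ y in A, ψ y ∂μi i := setIntegral_nonneg hA fun y _ => hψ0 y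
      linarith
    · obtain ⟨t₂, ht₂, hsub₂⟩ := hKc.exists_cthickening_subset_open hU hKU
      obtain ⟨h, hhc, hhcs, hhts, hh1, hh01, hhsupp⟩ := exists_cutoff K hKc hKne ht₂
      have hsuppA : Function.support h ⊆ A :=
        hhsupp.trans ((thickening_subset_cthickening _ _).trans (hsub₂.trans interior_subset))
      have hφ2c : Continuous fun y => ψ y * h y := hψ.mul hhc
      have hφ2cs : HasCompactSupport fun y => ψ y * h y := hhcs.mul_left
      have hφ2Ω : tsupport (fun y => ψ y * h y) ⊆ Ω :=
        (tsupport_mul_subset_right (f := ψ) (g := h)).trans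
          (hhts.trans (hsub₂.trans (hUsub.trans hAΩ)))
      have hconv2 := hw _ hφ2c hφ2cs hφ2Ω
      have hKm : MeasurableSet K := hKc.isClosed.measurableSet
      have hintK : IntegrableOn ψ K μ :=
        integrableOn_of_subset_compact hAc (hKU.trans hUsub) hψ.aestronglyMeasurable hψb
      have key_lower : (∫ y in A, ψ y ∂μ) - ε / 4 ≤ ∫ y, ψ y * h y ∂μ := by
        have f1 : (∫ y in K, ψ y ∂μ) ≤ ∫ y, ψ y * h y ∂μ := by
          rw [← integral_indicator hKm]
          refine integral_mono (hintK.integrable_indicator hKm)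
            (hφ2c.integrable_of_hasCompactSupport hφ2cs) fun y => ?_
          by_cases hy : y ∈ K
          · have hh1' : h y = 1 := hh1 hy
            rw [indicator_of_mem hy, hh1', mul_one]
          · rw [indicator_of_notMem hy]
            exact mul_nonneg (hψ0 y) (hh01 y).1
        have f2 : (∫ y in interior A, ψ y ∂μ)
            = (∫ y in K, ψ y ∂μ) + ∫ y in interior A \ K, ψ y ∂μ := by
          conv_lhs => rw [show interior A = K ∪ (interior A \ K) from
            (union_diff_cancel hKU).symm]
          exact setIntegral_union disjoint_sdiff_self_right (hU.measurableSet.diff hKm)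
            hintK (hintU.mono_set diff_subset)
        have f3 : (∫ y in interior A \ K, ψ y ∂μ) ≤ ε / 4 := by
          calc (∫ y in interior A \ K, ψ y ∂μ) ≤ ‖∫ y in interior A \ K, ψ y ∂μ‖ :=
                le_abs_self _
            _ ≤ C * (μ (interior A \ K)).toReal :=
                norm_setIntegral_le_of_norm_le_const (f := ψ)
                  (lt_of_le_of_lt (measure_mono (diff_subset.trans hUsub)) hAc.measure_lt_top)
                  (fun y _ => by simpa using hψb y)
            _ ≤ ε / 4 := htoReal _ hKsmall.le
        linarith [e5I]
      have h2 : ∀ᶠ i in atTop, (∫ y, ψ y * h y ∂μ) - ε / 4 < ∫ y, ψ y * h y ∂μi i :=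
        hconv2.eventually_const_lt (by linarith)
      filter_upwards [h2] with i hi
      have h1 : (∫ y, ψ y * h y ∂μi i) ≤ ∫ y in A, ψ y ∂μi i := by
        rw [← integral_indicator hA]
        refine integral_mono (hφ2c.integrable_of_hasCompactSupport hφ2cs)
          ((hintA (μi i)).integrable_indicator hA) fun y => ?_
        by_cases hy : y ∈ A
        · rw [indicator_of_mem hy]
          calc ψ y * h y ≤ ψ y * 1 := mul_le_mul_of_nonneg_left (hh01 y).2 (hψ0 y)
            _ = ψ y := mul_one _
        · rw [indicator_of_notMem hy]
          have : h y = 0 := by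
            by_contra hh
            exact hy (hsuppA hh)
          rw [this, mul_zero]
      linarith
  obtain ⟨N₁, hN₁⟩ := eventually_atTop.1 hup
  obtain ⟨N₂, hN₂⟩ := eventually_atTop.1 hlow
  refine ⟨max N₁ N₂, fun i hi => ?_⟩
  have hu := hN₁ i (le_trans (le_max_left _ _) hi)
  have hl := hN₂ i (le_trans (le_max_right _ _) hi)
  rw [Real.dist_eq, abs_sub_lt_iff]
  constructor <;> linarith

section F

variable {n : ℕ} {ν : Measure (EuclideanSpace ℝ (Fin n))} [IsFiniteMeasureOnCompacts ν]
  {ω : Set (EuclideanSpace ℝ (Fin n))} {ψ : EuclideanSpace ℝ (Fin n) → ℝ} {C : ℝ}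

lemma psi_abs_le (hψ0 : ∀ y, 0 ≤ ψ y) (hψC : ∀ y, ψ y ≤ C) : ∀ y, |ψ y| ≤ C := fun y =>
  abs_le.2 ⟨by linarith [hψ0 y, hψC y, le_trans (hψ0 y) (hψC y)], hψC y⟩

lemma F_int (hωcpt : IsCompact (closure ω)) (hψm : AEStronglyMeasurable ψ ν)
    (hψ0 : ∀ y, 0 ≤ ψ y) (hψC : ∀ y, ψ y ≤ C) (x : EuclideanSpace ℝ (Fin n)) (r : ℝ) :
    IntegrableOn ψ (ball x r ∩ ω) ν :=
  integrableOn_of_subset_compact hωcpt (inter_subset_right.trans subset_closure) hψm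
    (psi_abs_le hψ0 hψC)

lemma F_mono (hωcpt : IsCompact (closure ω)) (hψm : AEStronglyMeasurable ψ ν)
    (hψ0 : ∀ y, 0 ≤ ψ y) (hψC : ∀ y, ψ y ≤ C) (x : EuclideanSpace ℝ (Fin n)) :
    Monotone fun r => ∫ y in ball x r ∩ ω, ψ y ∂ν := by
  intro r r' hrr'
  exact setIntegral_mono_set (F_int hωcpt hψm hψ0 hψC x r')
    (ae_of_all _ fun y => hψ0 y)
    ((inter_subset_inter_left ω (ball_subset_ball hrr')).eventuallyLE)

lemma F_nonneg (hω : IsOpen ω) (hψ0 : ∀ y, 0 ≤ ψ y) (x : EuclideanSpace ℝ (Fin n)) (r : ℝ) :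
    0 ≤ ∫ y in ball x r ∩ ω, ψ y ∂ν :=
  setIntegral_nonneg (measurableSet_ball.inter hω.measurableSet) fun y _ => hψ0 y

lemma F_le (hωcpt : IsCompact (closure ω)) (hψm : AEStronglyMeasurable ψ ν)
    (hψ0 : ∀ y, 0 ≤ ψ y) (hψC : ∀ y, ψ y ≤ C) (x : EuclideanSpace ℝ (Fin n)) (r : ℝ) :
    (∫ y in ball x r ∩ ω, ψ y ∂ν) ≤ C * (ν (closure ω)).toReal := by
  have hC : 0 ≤ C := le_trans (hψ0 0) (hψC 0)
  calc (∫ y in ball x r ∩ ω, ψ y ∂ν) ≤ ‖∫ y in ball x r ∩ ω, ψ y ∂ν‖ := le_abs_self _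
    _ ≤ C * (ν (ball x r ∩ ω)).toReal :=
        norm_setIntegral_le_of_norm_le_const (f := ψ)
          (lt_of_le_of_lt (measure_mono (inter_subset_right.trans subset_closure))
            hωcpt.measure_lt_top)
          (fun y _ => by simpa using psi_abs_le hψ0 hψC y)
    _ ≤ C * (ν (closure ω)).toReal := by
        apply mul_le_mul_of_nonneg_left _ hC
        exact ENNReal.toReal_mono hωcpt.measure_lt_top.ne
          (measure_mono (inter_subset_right.trans subset_closure))

lemma F_intervalIntegrable (hωcpt : IsCompact (closure ω)) (hψm : AEStronglyMeasurable ψ ν)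
    (hψ0 : ∀ y, 0 ≤ ψ y) (hψC : ∀ y, ψ y ≤ C) (x : EuclideanSpace ℝ (Fin n)) (a b : ℝ) :
    IntervalIntegrable (fun r => ∫ y in ball x r ∩ ω, ψ y ∂ν) volume a b :=
  (F_mono hωcpt hψm hψ0 hψC x).intervalIntegrable

lemma F_integrableOn (hωcpt : IsCompact (closure ω)) (hψm : AEStronglyMeasurable ψ ν)
    (hψ0 : ∀ y, 0 ≤ ψ y) (hψC : ∀ y, ψ y ≤ C) (x : EuclideanSpace ℝ (Fin n)) (a b : ℝ) :
    IntegrableOn (fun r => ∫ y in ball x r ∩ ω, ψ y ∂ν) (Ioo a b) volume :=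
  (F_intervalIntegrable hωcpt hψm hψ0 hψC x a b).1.mono_set Ioo_subset_Ioc_self

/-- Shift estimate: moving the center of the ball by `≤ δ` changes the `r`-integrated
ball integrals by at most `2 δ C ν(ω̄)`. -/
lemma F_shift (hω : IsOpen ω) (hωcpt : IsCompact (closure ω))
    (hψm : AEStronglyMeasurable ψ ν) (hψ0 : ∀ y, 0 ≤ ψ y) (hψC : ∀ y, ψ y ≤ C)
    {x x' : EuclideanSpace ℝ (Fin n)} {δ R : ℝ} (hδ : 0 < δ) (hR : 0 < R)
    (hxx' : dist x x' ≤ δ) :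
    (∫ r in Ioo (0:ℝ) R,
        |(∫ y in ball x r ∩ ω, ψ y ∂ν) - ∫ y in ball x' r ∩ ω, ψ y ∂ν|)
      ≤ 2 * δ * (C * (ν (closure ω)).toReal) := by
  set G : ℝ → ℝ := fun r => ∫ y in ball x' r ∩ ω, ψ y ∂ν with hGdef
  set F : ℝ → ℝ := fun r => ∫ y in ball x r ∩ ω, ψ y ∂ν with hFdef
  have hGmono : Monotone G := F_mono hωcpt hψm hψ0 hψC x'
  have hFmono : Monotone F := F_mono hωcpt hψm hψ0 hψC x
  have key : ∀ r : ℝ, |F r - G r| ≤ G (r + δ) - G (r - δ) := by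
    intro r
    have h1 : F r ≤ G (r + δ) := by
      apply setIntegral_mono_set (F_int hωcpt hψm hψ0 hψC x' (r + δ))
        (ae_of_all _ fun y => hψ0 y)
      refine (inter_subset_inter_left ω (ball_subset_ball' ?_)).eventuallyLE
      linarith
    have h2 : G (r - δ) ≤ F r := by
      apply setIntegral_mono_set (F_int hωcpt hψm hψ0 hψC x r)
        (ae_of_all _ fun y => hψ0 y)
      refine (inter_subset_inter_left ω (ball_subset_ball' ?_)).eventuallyLE
      rw [dist_comm]
      linarith
    have h3 : G (r - δ) ≤ G r := hGmono (by linarith)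
    have h4 : G r ≤ G (r + δ) := hGmono (by linarith)
    rw [abs_sub_le_iff]
    constructor <;> linarith
  have hGshift1 : Monotone fun r => G (r + δ) :=
    hGmono.comp (fun a b hab => by simpa using add_le_add_right hab δ)
  have hGshift2 : Monotone fun r => G (r - δ) :=
    hGmono.comp (fun a b hab => by simpa using sub_le_sub_right hab δ)
  have hFGint : IntegrableOn (fun r => |F r - G r|) (Ioo (0:ℝ) R) volume :=
    (((F_integrableOn hωcpt hψm hψ0 hψC x 0 R).sub
      (F_integrableOn hωcpt hψm hψ0 hψC x' 0 R))).abs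
  have hshiftint : IntegrableOn (fun r => G (r + δ) - G (r - δ)) (Ioo (0:ℝ) R) volume :=
    ((hGshift1.intervalIntegrable).1.mono_set Ioo_subset_Ioc_self).sub
      ((hGshift2.intervalIntegrable).1.mono_set Ioo_subset_Ioc_self)
  have step1 : (∫ r in Ioo (0:ℝ) R, |F r - G r|)
      ≤ ∫ r in Ioo (0:ℝ) R, (G (r + δ) - G (r - δ)) :=
    setIntegral_mono_on hFGint hshiftint measurableSet_Ioo fun r _ => key r
  have hGib : ∀ a b : ℝ, IntervalIntegrable G volume a b := fun a b => hGmono.intervalIntegrable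
  have step2 : (∫ r in Ioo (0:ℝ) R, (G (r + δ) - G (r - δ)))
      = (∫ r in (R - δ)..(R + δ), G r) - ∫ r in (-δ)..δ, G r := by
    rw [← integral_Ioc_eq_integral_Ioo, ← intervalIntegral.integral_of_le hR.le,
      intervalIntegral.integral_sub (hGshift1.intervalIntegrable) (hGshift2.intervalIntegrable),
      intervalIntegral.integral_comp_add_right G δ,
      intervalIntegral.integral_comp_sub_right G δ]
    have split1 : (∫ r in (-δ)..δ, G r) + ∫ r in δ..(R+δ), G r = ∫ r in (-δ)..(R+δ), G r :=
      intervalIntegral.integral_add_adjacent_intervals (hGib _ _) (hGib _ _)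
    have split2 : (∫ r in (-δ)..(R-δ), G r) + ∫ r in (R-δ)..(R+δ), G r
        = ∫ r in (-δ)..(R+δ), G r :=
      intervalIntegral.integral_add_adjacent_intervals (hGib _ _) (hGib _ _)
    rw [zero_add, zero_sub]
    linarith
  have bound1 : 0 ≤ ∫ r in (-δ)..δ, G r :=
    intervalIntegral.integral_nonneg (by linarith) fun u _ => F_nonneg hω hψ0 x' u
  have bound2 : (∫ r in (R-δ)..(R+δ), G r) ≤ 2 * δ * (C * (ν (closure ω)).toReal) := by
    have hmax : ∀ u ∈ Icc (R-δ) (R+δ), G u ≤ C * (ν (closure ω)).toReal := fun u _ =>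
      F_le hωcpt hψm hψ0 hψC x' u
    calc (∫ r in (R-δ)..(R+δ), G r)
        ≤ ∫ _ in (R-δ)..(R+δ), C * (ν (closure ω)).toReal :=
          intervalIntegral.integral_mono_on (by linarith) (hGib _ _)
            intervalIntegrable_const hmax
      _ = ((R+δ) - (R-δ)) • (C * (ν (closure ω)).toReal) := intervalIntegral.integral_const _
      _ = 2 * δ * (C * (ν (closure ω)).toReal) := by rw [smul_eq_mul]; ring_nf
  calc (∫ r in Ioo (0:ℝ) R, |F r - G r|)
      ≤ ∫ r in Ioo (0:ℝ) R, (G (r + δ) - G (r - δ)) := step1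
    _ = (∫ r in (R - δ)..(R + δ), G r) - ∫ r in (-δ)..δ, G r := step2
    _ ≤ 2 * δ * (C * (ν (closure ω)).toReal) := by linarith

end F

/-- Only countably many spheres around a fixed point have positive measure. -/
lemma countable_sphere_pos {n : ℕ} (μ : Measure (EuclideanSpace ℝ (Fin n)))
    [IsFiniteMeasureOnCompacts μ] (x : EuclideanSpace ℝ (Fin n)) :
    Set.Countable {r : ℝ | μ (sphere x r) ≠ 0} := by
  have h := MeasureTheory.Measure.countable_meas_pos_of_disjoint_iUnion (μ := μ)
    (As := fun r : ℝ => sphere x r)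
    (fun r => isClosed_sphere.measurableSet)
    (fun r r' hrr' => by
      rw [Function.onFun, Set.disjoint_left]
      intro y hy hy'
      exact hrr' (by rw [mem_sphere] at hy hy'; rw [← hy, ← hy']))
  convert h using 1
  ext r
  simp [pos_iff_ne_zero]

/-- A finite `ε₀`-net (in sup distance on `closure ω`) for the family of `k`-Lipschitz
functions with values in `[0, C]`. -/
lemma exists_function_net {n : ℕ} {ω : Set (EuclideanSpace ℝ (Fin n))}
    (hωcpt : IsCompact (closure ω)) (k : ℝ≥0) {C : ℝ} {ε₀ : ℝ} (hε₀ : 0 < ε₀) :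
    ∃ Ψ : Set (EuclideanSpace ℝ (Fin n) → ℝ), Ψ.Finite ∧
      (∀ g ∈ Ψ, LipschitzWith k g ∧ ∀ y, g y ∈ Icc (0:ℝ) C) ∧
      ∀ ψ : EuclideanSpace ℝ (Fin n) → ℝ, LipschitzWith k ψ → (∀ y, ψ y ∈ Icc (0:ℝ) C) →
        ∃ g ∈ Ψ, ∀ y ∈ closure ω, |ψ y - g y| ≤ ε₀ := by
  classical
  set δ₀ : ℝ := ε₀ / (4 * ((k:ℝ) + 1)) with hδ₀def
  have hδ₀ : 0 < δ₀ := by positivity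
  obtain ⟨T, hTfin, hTcov⟩ := totallyBounded_iff.1 hωcpt.totallyBounded δ₀ hδ₀
  haveI : Fintype ↥T := hTfin.fintype
  set Family : Set (EuclideanSpace ℝ (Fin n) → ℝ) :=
    {ψ | LipschitzWith k ψ ∧ ∀ y, ψ y ∈ Icc (0:ℝ) C} with hFam
  set Φ : (EuclideanSpace ℝ (Fin n) → ℝ) → (↥T → ℝ) := fun ψ z => ψ ↑z with hΦ
  have hSsub : Φ '' Family ⊆ Icc (fun _ => (0:ℝ)) (fun _ => C) := by
    rintro g ⟨ψ, hψ, rfl⟩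
    exact ⟨fun z => (hψ.2 z).1, fun z => (hψ.2 z).2⟩
  have hStb : TotallyBounded (Φ '' Family) :=
    (isCompact_Icc.totallyBounded).subset hSsub
  obtain ⟨t, hts, htf, htcov⟩ := hStb.exists_subset (dist_mem_uniformity (half_pos hε₀))
  set pick : (↥T → ℝ) → (EuclideanSpace ℝ (Fin n) → ℝ) := fun g =>
    if h : ∃ ψ, ψ ∈ Family ∧ Φ ψ = g then h.choose else fun _ => 0 with hpick
  have hpickmem : ∀ g ∈ t, pick g ∈ Family ∧ Φ (pick g) = g := by
    intro g hg
    obtain ⟨ψ, hψ, hψg⟩ := hts hg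
    have hex : ∃ ψ, ψ ∈ Family ∧ Φ ψ = g := ⟨ψ, hψ, hψg⟩
    simp only [hpick, dif_pos hex]
    exact hex.choose_spec
  refine ⟨pick '' t, htf.image _, ?_, ?_⟩
  · rintro g' ⟨g, hg, rfl⟩
    exact (hpickmem g hg).1
  · intro ψ hψlip hψC
    have hψmem : ψ ∈ Family := ⟨hψlip, hψC⟩
    obtain ⟨g, hgt, hgd⟩ := by
      have := htcov (mem_image_of_mem Φ hψmem)
      simpa only [mem_iUnion, exists_prop, mem_setOf_eq] using this
    refine ⟨pick g, mem_image_of_mem _ hgt, ?_⟩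
    obtain ⟨hpickFam, hpickΦ⟩ := hpickmem g hgt
    intro y hy
    obtain ⟨z, hzT, hyz⟩ := by
      have := hTcov hy
      simpa only [mem_iUnion, exists_prop] using this
    have hdz : dist (Φ ψ) g < ε₀ / 2 := hgd
    have hcoord : dist (ψ ↑(⟨z, hzT⟩ : ↥T)) (g ⟨z, hzT⟩) < ε₀ / 2 :=
      (dist_pi_lt_iff (half_pos hε₀)).1 hdz ⟨z, hzT⟩
    have hg' : pick g z = g ⟨z, hzT⟩ := congrFun hpickΦ ⟨z, hzT⟩
    have l1 : dist (ψ y) (ψ z) ≤ (k:ℝ) * δ₀ := by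
      have := hψlip.dist_le_mul y z
      have hdyz : dist y z ≤ δ₀ := (mem_ball.1 hyz).le
      calc dist (ψ y) (ψ z) ≤ (k:ℝ) * dist y z := this
        _ ≤ (k:ℝ) * δ₀ := mul_le_mul_of_nonneg_left hdyz k.coe_nonneg
    have l3 : dist (pick g z) (pick g y) ≤ (k:ℝ) * δ₀ := by
      have := hpickFam.1.dist_le_mul z y
      have hdyz : dist z y ≤ δ₀ := by rw [dist_comm]; exact (mem_ball.1 hyz).le
      calc dist (pick g z) (pick g y) ≤ (k:ℝ) * dist z y := this
        _ ≤ (k:ℝ) * δ₀ := mul_le_mul_of_nonneg_left hdyz k.coe_nonneg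
    have l2 : dist (ψ z) (pick g z) < ε₀ / 2 := by rw [hg']; exact hcoord
    have hk1 : (0:ℝ) < (k:ℝ) + 1 := by positivity
    have h4 : ((k:ℝ) + 1) * δ₀ = ε₀ / 4 := by
      rw [hδ₀def]; field_simp
    have harith : 2 * ((k:ℝ) * δ₀) ≤ ε₀ / 2 := by nlinarith [k.coe_nonneg, hδ₀.le]
    have htri := dist_triangle4 (ψ y) (ψ z) (pick g z) (pick g y)
    have hfin : dist (ψ y) (pick g y) ≤ ε₀ := by linarith
    rw [Real.dist_eq] at hfin
    exact hfin

/-- Dominated convergence in `r` for a fixed test function and center. -/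
lemma T3_tendsto {n : ℕ}
    {Ω : Set (EuclideanSpace ℝ (Fin n))} (hΩ : IsOpen Ω)
    {μi : ℕ → Measure (EuclideanSpace ℝ (Fin n))} {μ : Measure (EuclideanSpace ℝ (Fin n))}
    [∀ i, IsFiniteMeasureOnCompacts (μi i)] [IsFiniteMeasureOnCompacts μ]
    (hw : WeakStarTendsto μi μ Ω)
    {ω : Set (EuclideanSpace ℝ (Fin n))} (hω : IsOpen ω)
    (hωcpt : IsCompact (closure ω)) (hωΩ : closure ω ⊆ Ω) (hbdry : μ (frontier ω) = 0)
    {g : EuclideanSpace ℝ (Fin n) → ℝ} (hgc : Continuous g) {C : ℝ}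
    (hg0 : ∀ y, 0 ≤ g y) (hgC : ∀ y, g y ≤ C) {M : ℝ}
    (hμM : (μ (closure ω)).toReal ≤ M) (hμiM : ∀ i, (μi i (closure ω)).toReal ≤ M)
    (z : EuclideanSpace ℝ (Fin n)) {R : ℝ} (hR : 0 < R) :
    Tendsto (fun i => ∫ r in Ioo (0:ℝ) R,
      |(∫ y in ball z r ∩ ω, g y ∂(μi i)) - ∫ y in ball z r ∩ ω, g y ∂μ|) atTop (𝓝 0) := by
  have hC : 0 ≤ C := le_trans (hg0 0) (hgC 0)
  have hM0 : 0 ≤ M := le_trans ENNReal.toReal_nonneg hμM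
  have hmono_i : ∀ i, Monotone fun r => ∫ y in ball z r ∩ ω, g y ∂(μi i) := fun i =>
    F_mono hωcpt hgc.aestronglyMeasurable hg0 hgC z
  have hmono : Monotone fun r => ∫ y in ball z r ∩ ω, g y ∂μ :=
    F_mono hωcpt hgc.aestronglyMeasurable hg0 hgC z
  have hmain := tendsto_integral_of_dominated_convergence
    (μ := volume.restrict (Ioo (0:ℝ) R))
    (F := fun i r => |(∫ y in ball z r ∩ ω, g y ∂(μi i)) - ∫ y in ball z r ∩ ω, g y ∂μ|)
    (f := fun _ => (0:ℝ)) (bound := fun _ => C * M)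
    (fun i => (((hmono_i i).measurable.sub hmono.measurable).abs).aestronglyMeasurable)
    ((integrableOn_const measure_Ioo_lt_top.ne))
    (fun i => ae_of_all _ fun r => by
      beta_reduce
      have h1 := F_nonneg (ν := μi i) hω hg0 z r
      have h2 := F_nonneg (ν := μ) hω hg0 z r
      have h3 := F_le hωcpt hgc.aestronglyMeasurable hg0 hgC z r (ν := μi i)
      have h4 := F_le hωcpt hgc.aestronglyMeasurable hg0 hgC z r (ν := μ)
      have h5 : C * (μi i (closure ω)).toReal ≤ C * M :=
        mul_le_mul_of_nonneg_left (hμiM i) hC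
      have h6 : C * (μ (closure ω)).toReal ≤ C * M := mul_le_mul_of_nonneg_left hμM hC
      rw [Real.norm_eq_abs, abs_abs, abs_sub_le_iff]
      constructor <;> linarith)
    ?_
  · simpa using hmain
  · -- a.e. convergence
    have hbad : volume {r : ℝ | μ (sphere z r) ≠ 0} = 0 :=
      (countable_sphere_pos μ z).measure_zero _
    have hae : ∀ᵐ r ∂volume, r ∉ {r : ℝ | μ (sphere z r) ≠ 0} :=
      measure_eq_zero_iff_ae_notMem.1 hbad
    refine ae_restrict_of_ae (hae.mono fun r hr => ?_)
    simp only [mem_setOf_eq, not_not] at hr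
    have hfrA : μ (frontier (ball z r ∩ ω)) = 0 := by
      have hsub : frontier (ball z r ∩ ω) ⊆ sphere z r ∪ frontier ω := by
        intro y hy
        rcases frontier_inter_subset (ball z r) ω hy with h | h
        · left
          have h1 : y ∈ closedBall z r :=
            closure_ball_subset_closedBall (frontier_subset_closure h.1)
          have h2 : y ∉ ball z r := fun hmem => h.1.2 (by rwa [isOpen_ball.interior_eq])
          simp only [mem_sphere, mem_closedBall, mem_ball] at *
          exact le_antisymm h1 (not_lt.1 h2)
        · exact Or.inr h.2
      exact measure_mono_null hsub (measure_union_null hr hbdry)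
    have hA : MeasurableSet (ball z r ∩ ω) := measurableSet_ball.inter hω.measurableSet
    have hsub : closure (ball z r ∩ ω) ⊆ closure ω := closure_mono inter_subset_right
    have hAc : IsCompact (closure (ball z r ∩ ω)) :=
      hωcpt.of_isClosed_subset isClosed_closure hsub
    have htd := portmanteau_setIntegral hΩ hw hA hAc (hsub.trans hωΩ) hfrA hgc hg0 hgC
    have := (htd.sub (tendsto_const_nhds
      (x := ∫ y in ball z r ∩ ω, g y ∂μ) (f := atTop))).abs
    simpa using this

lemma aux_frac {a ε : ℝ} (ha : 0 ≤ a) (hε : 0 < ε) : a * (ε / (5 * (a + 1))) ≤ ε / 5 := by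
  have h : a * (ε / (5 * (a + 1))) = ε / 5 * (a / (a+1)) := by field_simp
  rw [h]
  have h2 : a / (a+1) ≤ 1 := by rw [div_le_one (by linarith)]; linarith
  nlinarith

lemma main0 {n : ℕ}
    (Ω : Set (EuclideanSpace ℝ (Fin n))) (hΩ : IsOpen Ω)
    (μi : ℕ → Measure (EuclideanSpace ℝ (Fin n))) (μ : Measure (EuclideanSpace ℝ (Fin n)))
    [∀ i, IsFiniteMeasureOnCompacts (μi i)] [IsFiniteMeasureOnCompacts μ]
    (hw : WeakStarTendsto μi μ Ω) (hmass : (⨆ i, μi i Ω) ≠ ⊤)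
    (ω : Set (EuclideanSpace ℝ (Fin n))) (hω : IsOpen ω)
    (hωcpt : IsCompact (closure ω)) (hωΩ : closure ω ⊆ Ω) (hbdry : μ (frontier ω) = 0)
    (k : ℝ≥0) (C : ℝ) (hC : 0 ≤ C) (R : ℝ) :
    ∀ ε > (0 : ℝ), ∃ N : ℕ, ∀ i ≥ N, ∀ ψ : EuclideanSpace ℝ (Fin n) → ℝ,
      LipschitzWith k ψ → (∀ y, ψ y ∈ Icc (0:ℝ) C) → ∀ x ∈ closure ω,
        (∫ r in Set.Ioo (0 : ℝ) R,
          |(∫ y in Metric.ball x r ∩ ω, ψ y ∂(μi i)) -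
            ∫ y in Metric.ball x r ∩ ω, ψ y ∂μ|) ≤ ε := by
  intro ε hε
  by_cases hR : 0 < R
  case neg =>
    refine ⟨0, fun i _ ψ _ _ x _ => ?_⟩
    rw [Ioo_eq_empty (by simpa using hR), Measure.restrict_empty, integral_zero_measure]
    exact hε.le
  set M : ℝ := (⨆ i, μi i Ω).toReal + (μ (closure ω)).toReal + 1 with hMdef
  have hM0 : 0 < M := by positivity
  have hμM : (μ (closure ω)).toReal ≤ M := by
    have := ENNReal.toReal_nonneg (a := ⨆ i, μi i Ω); linarith
  have hμiM : ∀ i, (μi i (closure ω)).toReal ≤ M := by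
    intro i
    have h1 : μi i (closure ω) ≤ ⨆ j, μi j Ω :=
      le_trans (measure_mono hωΩ) (le_iSup (fun j => μi j Ω) i)
    have h2 := ENNReal.toReal_mono hmass h1
    have := ENNReal.toReal_nonneg (a := μ (closure ω)); linarith
  set ε₀ : ℝ := ε / (5 * (R * M + 1)) with hε₀def
  have hε₀ : 0 < ε₀ := by have := hR; positivity
  set δ : ℝ := ε / (5 * (2 * C * M + 1)) with hδdef
  have hδ : 0 < δ := by positivity
  obtain ⟨Ψ, hΨfin, hΨmem, hΨnet⟩ := exists_function_net hωcpt k (C := C) hε₀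
  obtain ⟨T, hTfin, hTcov⟩ := totallyBounded_iff.1 hωcpt.totallyBounded δ hδ
  have hev : ∀ᶠ i in atTop, ∀ g ∈ Ψ, ∀ z ∈ T,
      (∫ r in Ioo (0:ℝ) R,
        |(∫ y in ball z r ∩ ω, g y ∂(μi i)) - ∫ y in ball z r ∩ ω, g y ∂μ|) < ε/5 := by
    rw [eventually_all_finite hΨfin]
    intro g hg
    rw [eventually_all_finite hTfin]
    intro z hz
    have hgl := hΨmem g hg
    exact (T3_tendsto hΩ hw hω hωcpt hωΩ hbdry hgl.1.continuous (fun y => (hgl.2 y).1)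
      (fun y => (hgl.2 y).2) hμM hμiM z hR).eventually_lt_const (by positivity)
  obtain ⟨N, hN⟩ := eventually_atTop.1 hev
  refine ⟨N, fun i hi ψ hψlip hψIcc x hx => ?_⟩
  obtain ⟨g, hgΨ, hgψ⟩ := hΨnet ψ hψlip hψIcc
  obtain ⟨z, hzT, hxz⟩ := by
    have := hTcov hx
    simpa only [mem_iUnion, exists_prop] using this
  obtain ⟨hglip, hgIcc⟩ := hΨmem g hgΨ
  have hg0 : ∀ y, 0 ≤ g y := fun y => (hgIcc y).1
  have hgC : ∀ y, g y ≤ C := fun y => (hgIcc y).2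
  have hψ0 : ∀ y, 0 ≤ ψ y := fun y => (hψIcc y).1
  have hψC : ∀ y, ψ y ≤ C := fun y => (hψIcc y).2
  have hψc := hψlip.continuous
  have hgc := hglip.continuous
  have hψm : ∀ ν : Measure (EuclideanSpace ℝ (Fin n)), AEStronglyMeasurable ψ ν :=
    fun ν => hψc.aestronglyMeasurable
  have hgm : ∀ ν : Measure (EuclideanSpace ℝ (Fin n)), AEStronglyMeasurable g ν :=
    fun ν => hgc.aestronglyMeasurable
  -- integrabilities of the six r-functions on (0, R)
  have I1 := F_integrableOn (ν := μi i) hωcpt (hψm _) hψ0 hψC x 0 R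
  have I2 := F_integrableOn (ν := μi i) hωcpt (hgm _) hg0 hgC x 0 R
  have I3 := F_integrableOn (ν := μi i) hωcpt (hgm _) hg0 hgC z 0 R
  have I4 := F_integrableOn (ν := μ) hωcpt (hgm _) hg0 hgC z 0 R
  have I5 := F_integrableOn (ν := μ) hωcpt (hgm _) hg0 hgC x 0 R
  have I6 := F_integrableOn (ν := μ) hωcpt (hψm _) hψ0 hψC x 0 R
  have J12 : IntegrableOn (fun r => |(∫ y in ball x r ∩ ω, ψ y ∂(μi i)) - ∫ y in ball x r ∩ ω, g y ∂(μi i)|) (Ioo (0:ℝ) R) volume := (I1.sub I2).abs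
  have J23 : IntegrableOn (fun r => |(∫ y in ball x r ∩ ω, g y ∂(μi i)) - ∫ y in ball z r ∩ ω, g y ∂(μi i)|) (Ioo (0:ℝ) R) volume := (I2.sub I3).abs
  have J34 : IntegrableOn (fun r => |(∫ y in ball z r ∩ ω, g y ∂(μi i)) - ∫ y in ball z r ∩ ω, g y ∂μ|) (Ioo (0:ℝ) R) volume := (I3.sub I4).abs
  have J45 : IntegrableOn (fun r => |(∫ y in ball z r ∩ ω, g y ∂μ) - ∫ y in ball x r ∩ ω, g y ∂μ|) (Ioo (0:ℝ) R) volume := (I4.sub I5).abs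
  have J56 : IntegrableOn (fun r => |(∫ y in ball x r ∩ ω, g y ∂μ) - ∫ y in ball x r ∩ ω, ψ y ∂μ|) (Ioo (0:ℝ) R) volume := (I5.sub I6).abs
  have J16 : IntegrableOn (fun r => |(∫ y in ball x r ∩ ω, ψ y ∂(μi i)) - ∫ y in ball x r ∩ ω, ψ y ∂μ|) (Ioo (0:ℝ) R) volume := (I1.sub I6).abs
  -- swap-function estimates (terms 1 and 5)
  have hswap : ∀ (ν : Measure (EuclideanSpace ℝ (Fin n))) (_ : IsFiniteMeasureOnCompacts ν)
      (hνM : (ν (closure ω)).toReal ≤ M),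
      (∫ r in Ioo (0:ℝ) R,
        |(∫ y in ball x r ∩ ω, ψ y ∂ν) - ∫ y in ball x r ∩ ω, g y ∂ν|) ≤ ε / 5 := by
    intro ν hνinst hνM
    have hpt : ∀ r : ℝ, |(∫ y in ball x r ∩ ω, ψ y ∂ν) - ∫ y in ball x r ∩ ω, g y ∂ν|
        ≤ ε₀ * M := by
      intro r
      have heq : (∫ y in ball x r ∩ ω, ψ y ∂ν) - (∫ y in ball x r ∩ ω, g y ∂ν)
          = ∫ y in ball x r ∩ ω, (ψ y - g y) ∂ν :=
        (integral_sub (F_int hωcpt (hψm _) hψ0 hψC x r) (F_int hωcpt (hgm _) hg0 hgC x r)).symm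
      rw [heq]
      have hb := norm_setIntegral_le_of_norm_le_const (μ := ν) (s := ball x r ∩ ω) (f := fun y => ψ y - g y)
        (lt_of_le_of_lt (measure_mono (inter_subset_right.trans subset_closure))
          hωcpt.measure_lt_top)
        (fun y hy => by
          simpa using hgψ y (subset_closure hy.2))
      calc |∫ y in ball x r ∩ ω, (ψ y - g y) ∂ν| ≤ ε₀ * (ν (ball x r ∩ ω)).toReal := hb
        _ ≤ ε₀ * M := by
            apply mul_le_mul_of_nonneg_left _ hε₀.le
            exact le_trans (ENNReal.toReal_mono hωcpt.measure_lt_top.ne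
              (measure_mono (inter_subset_right.trans subset_closure))) hνM
    have hIν : IntegrableOn (fun r =>
        |(∫ y in ball x r ∩ ω, ψ y ∂ν) - ∫ y in ball x r ∩ ω, g y ∂ν|) (Ioo (0:ℝ) R) volume :=
      ((F_integrableOn (ν := ν) hωcpt (hψm _) hψ0 hψC x 0 R).sub
        (F_integrableOn (ν := ν) hωcpt (hgm _) hg0 hgC x 0 R)).abs
    calc (∫ r in Ioo (0:ℝ) R,
          |(∫ y in ball x r ∩ ω, ψ y ∂ν) - ∫ y in ball x r ∩ ω, g y ∂ν|)
        ≤ ∫ _ in Ioo (0:ℝ) R, (ε₀ * M) :=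
          setIntegral_mono_on hIν (integrableOn_const measure_Ioo_lt_top.ne)
            measurableSet_Ioo (fun r _ => hpt r)
      _ = R * (ε₀ * M) := by
          rw [setIntegral_const, Real.volume_real_Ioo, smul_eq_mul, sub_zero,
            max_eq_left hR.le]
      _ ≤ ε / 5 := by
          have h1 : R * (ε₀ * M) = (R * M) * ε₀ := by ring
          rw [h1, hε₀def]
          exact aux_frac (by positivity) hε
  have T1 := hswap (μi i) inferInstance (hμiM i)
  have T5' := hswap μ inferInstance hμM
  have T5 : (∫ r in Ioo (0:ℝ) R,
      |(∫ y in ball x r ∩ ω, g y ∂μ) - ∫ y in ball x r ∩ ω, ψ y ∂μ|) ≤ ε / 5 := by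
    have : (fun r => |(∫ y in ball x r ∩ ω, g y ∂μ) - ∫ y in ball x r ∩ ω, ψ y ∂μ|)
        = fun r => |(∫ y in ball x r ∩ ω, ψ y ∂μ) - ∫ y in ball x r ∩ ω, g y ∂μ| := by
      funext r; rw [abs_sub_comm]
    rw [this]
    exact T5'
  -- shift estimates (terms 2 and 4)
  have hshiftbound : ∀ (ν : Measure (EuclideanSpace ℝ (Fin n))) (_ : IsFiniteMeasureOnCompacts ν)
      (hνM : (ν (closure ω)).toReal ≤ M) {x₁ x₂ : EuclideanSpace ℝ (Fin n)}
      (hd : dist x₁ x₂ ≤ δ),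
      (∫ r in Ioo (0:ℝ) R,
        |(∫ y in ball x₁ r ∩ ω, g y ∂ν) - ∫ y in ball x₂ r ∩ ω, g y ∂ν|) ≤ ε / 5 := by
    intro ν hνinst hνM x₁ x₂ hd
    calc (∫ r in Ioo (0:ℝ) R,
          |(∫ y in ball x₁ r ∩ ω, g y ∂ν) - ∫ y in ball x₂ r ∩ ω, g y ∂ν|)
        ≤ 2 * δ * (C * (ν (closure ω)).toReal) :=
          F_shift hω hωcpt (hgm _) hg0 hgC hδ hR hd
      _ ≤ (2 * C * M) * δ := by
          have h1 : 2 * δ * (C * (ν (closure ω)).toReal) ≤ 2 * δ * (C * M) :=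
            mul_le_mul_of_nonneg_left (mul_le_mul_of_nonneg_left hνM hC) (by positivity)
          linarith [h1]
      _ ≤ ε / 5 := by
          rw [hδdef]
          exact aux_frac (by positivity) hε
  have T2 := hshiftbound (μi i) inferInstance (hμiM i) (mem_ball.1 hxz).le
  have T4 := hshiftbound μ inferInstance hμM (by rw [dist_comm]; exact (mem_ball.1 hxz).le)
  have T3 := (hN i hi g hgΨ z hzT).le
  -- pointwise five-term triangle inequality
  have key : ∀ r : ℝ,
      |(∫ y in ball x r ∩ ω, ψ y ∂(μi i)) - ∫ y in ball x r ∩ ω, ψ y ∂μ|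
      ≤ |(∫ y in ball x r ∩ ω, ψ y ∂(μi i)) - ∫ y in ball x r ∩ ω, g y ∂(μi i)|
        + |(∫ y in ball x r ∩ ω, g y ∂(μi i)) - ∫ y in ball z r ∩ ω, g y ∂(μi i)|
        + |(∫ y in ball z r ∩ ω, g y ∂(μi i)) - ∫ y in ball z r ∩ ω, g y ∂μ|
        + |(∫ y in ball z r ∩ ω, g y ∂μ) - ∫ y in ball x r ∩ ω, g y ∂μ|
        + |(∫ y in ball x r ∩ ω, g y ∂μ) - ∫ y in ball x r ∩ ω, ψ y ∂μ| := by
    intro r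
    have h1 := abs_sub_le (∫ y in ball x r ∩ ω, ψ y ∂(μi i))
      (∫ y in ball x r ∩ ω, g y ∂(μi i)) (∫ y in ball x r ∩ ω, ψ y ∂μ)
    have h2 := abs_sub_le (∫ y in ball x r ∩ ω, g y ∂(μi i))
      (∫ y in ball z r ∩ ω, g y ∂(μi i)) (∫ y in ball x r ∩ ω, ψ y ∂μ)
    have h3 := abs_sub_le (∫ y in ball z r ∩ ω, g y ∂(μi i))
      (∫ y in ball z r ∩ ω, g y ∂μ) (∫ y in ball x r ∩ ω, ψ y ∂μ)
    have h4 := abs_sub_le (∫ y in ball z r ∩ ω, g y ∂μ)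
      (∫ y in ball x r ∩ ω, g y ∂μ) (∫ y in ball x r ∩ ω, ψ y ∂μ)
    linarith
  -- integrate the pointwise bound and split the sum
  have hsum_int1 : IntegrableOn (fun r => |(∫ y in ball x r ∩ ω, ψ y ∂(μi i)) - ∫ y in ball x r ∩ ω, g y ∂(μi i)|
          + |(∫ y in ball x r ∩ ω, g y ∂(μi i)) - ∫ y in ball z r ∩ ω, g y ∂(μi i)|) (Ioo (0:ℝ) R) volume := J12.add J23
  have hsum_int2 : IntegrableOn (fun r => |(∫ y in ball x r ∩ ω, ψ y ∂(μi i)) - ∫ y in ball x r ∩ ω, g y ∂(μi i)|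
          + |(∫ y in ball x r ∩ ω, g y ∂(μi i)) - ∫ y in ball z r ∩ ω, g y ∂(μi i)|
          + |(∫ y in ball z r ∩ ω, g y ∂(μi i)) - ∫ y in ball z r ∩ ω, g y ∂μ|) (Ioo (0:ℝ) R) volume := hsum_int1.add J34
  have hsum_int3 : IntegrableOn (fun r => |(∫ y in ball x r ∩ ω, ψ y ∂(μi i)) - ∫ y in ball x r ∩ ω, g y ∂(μi i)|
          + |(∫ y in ball x r ∩ ω, g y ∂(μi i)) - ∫ y in ball z r ∩ ω, g y ∂(μi i)|
          + |(∫ y in ball z r ∩ ω, g y ∂(μi i)) - ∫ y in ball z r ∩ ω, g y ∂μ|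
          + |(∫ y in ball z r ∩ ω, g y ∂μ) - ∫ y in ball x r ∩ ω, g y ∂μ|) (Ioo (0:ℝ) R) volume := hsum_int2.add J45
  have hsum_int4 : IntegrableOn (fun r => |(∫ y in ball x r ∩ ω, ψ y ∂(μi i)) - ∫ y in ball x r ∩ ω, g y ∂(μi i)|
          + |(∫ y in ball x r ∩ ω, g y ∂(μi i)) - ∫ y in ball z r ∩ ω, g y ∂(μi i)|
          + |(∫ y in ball z r ∩ ω, g y ∂(μi i)) - ∫ y in ball z r ∩ ω, g y ∂μ|
          + |(∫ y in ball z r ∩ ω, g y ∂μ) - ∫ y in ball x r ∩ ω, g y ∂μ|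
          + |(∫ y in ball x r ∩ ω, g y ∂μ) - ∫ y in ball x r ∩ ω, ψ y ∂μ|) (Ioo (0:ℝ) R) volume := hsum_int3.add J56
  calc (∫ r in Ioo (0:ℝ) R,
        |(∫ y in ball x r ∩ ω, ψ y ∂(μi i)) - ∫ y in ball x r ∩ ω, ψ y ∂μ|)
      ≤ ∫ r in Ioo (0:ℝ) R,
          (|(∫ y in ball x r ∩ ω, ψ y ∂(μi i)) - ∫ y in ball x r ∩ ω, g y ∂(μi i)|
          + |(∫ y in ball x r ∩ ω, g y ∂(μi i)) - ∫ y in ball z r ∩ ω, g y ∂(μi i)|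
          + |(∫ y in ball z r ∩ ω, g y ∂(μi i)) - ∫ y in ball z r ∩ ω, g y ∂μ|
          + |(∫ y in ball z r ∩ ω, g y ∂μ) - ∫ y in ball x r ∩ ω, g y ∂μ|
          + |(∫ y in ball x r ∩ ω, g y ∂μ) - ∫ y in ball x r ∩ ω, ψ y ∂μ|) :=
        setIntegral_mono_on J16 hsum_int4 measurableSet_Ioo (fun r _ => key r)
    _ = (∫ r in Ioo (0:ℝ) R,
          |(∫ y in ball x r ∩ ω, ψ y ∂(μi i)) - ∫ y in ball x r ∩ ω, g y ∂(μi i)|)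
        + (∫ r in Ioo (0:ℝ) R,
          |(∫ y in ball x r ∩ ω, g y ∂(μi i)) - ∫ y in ball z r ∩ ω, g y ∂(μi i)|)
        + (∫ r in Ioo (0:ℝ) R,
          |(∫ y in ball z r ∩ ω, g y ∂(μi i)) - ∫ y in ball z r ∩ ω, g y ∂μ|)
        + (∫ r in Ioo (0:ℝ) R,
          |(∫ y in ball z r ∩ ω, g y ∂μ) - ∫ y in ball x r ∩ ω, g y ∂μ|)
        + (∫ r in Ioo (0:ℝ) R,
          |(∫ y in ball x r ∩ ω, g y ∂μ) - ∫ y in ball x r ∩ ω, ψ y ∂μ|) := by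
        rw [integral_add hsum_int3 J56, integral_add hsum_int2 J45,
          integral_add hsum_int1 J34, integral_add J12 J23]
    _ ≤ ε/5 + ε/5 + ε/5 + ε/5 + ε/5 := by
        gcongr <;> first | exact T1 | exact T2 | exact T3 | exact T4 | exact T5
    _ = ε := by ring

/-- Let `μ_i ⇀* μ` in an open `Ω ⊆ ℝⁿ` with `sup_i μ_i(Ω) < ∞`, and let
`ω ⊂⊂ Ω` be open with `μ(∂ω) = 0`. Then the quantity
`Δ(μ_i, μ) = sup_{φ ∈ Lip_k(ω), ‖φ‖_∞ ≤ C, x ∈ ω̄} ∫₀^{d(ω̄,Ωᶜ)/2} |∫_{B_r(x)∩ω} φ dμ_i −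
∫_{B_r(x)∩ω} φ dμ| dr` tends to `0`. -/
theorem delta_tendsto_zero {n : ℕ}
    (Ω : Set (EuclideanSpace ℝ (Fin n))) (hΩ : IsOpen Ω)
    (μi : ℕ → Measure (EuclideanSpace ℝ (Fin n))) (μ : Measure (EuclideanSpace ℝ (Fin n)))
    [∀ i, IsFiniteMeasureOnCompacts (μi i)] [IsFiniteMeasureOnCompacts μ]
    (hw : WeakStarTendsto μi μ Ω)
    (hmass : (⨆ i, μi i Ω) ≠ ⊤)
    (ω : Set (EuclideanSpace ℝ (Fin n))) (hω : IsOpen ω)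
    (hωcpt : IsCompact (closure ω)) (hωΩ : closure ω ⊆ Ω)
    (hbdry : μ (frontier ω) = 0)
    (k : ℝ≥0) (C : ℝ) (hC : 0 ≤ C) :
    ∀ ε > (0 : ℝ), ∃ N : ℕ, ∀ i ≥ N, ∀ φ : EuclideanSpace ℝ (Fin n) → ℝ,
      LipschitzOnWith k φ ω → (∀ y ∈ ω, |φ y| ≤ C) →
      ∀ x ∈ closure ω,
        (∫ r in Set.Ioo (0 : ℝ) (setDistToCompl ω Ω / 2),
          |(∫ y in Metric.ball x r ∩ ω, φ y ∂(μi i)) -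
            ∫ y in Metric.ball x r ∩ ω, φ y ∂μ|) ≤ ε := by
  intro ε hε
  set R : ℝ := setDistToCompl ω Ω / 2 with hRdef
  obtain ⟨N, hN⟩ := main0 Ω hΩ μi μ hw hmass ω hω hωcpt hωΩ hbdry k C hC R (ε/2)
    (by linarith)
  refine ⟨N, fun i hi φ hφlip hφC x hx => ?_⟩
  obtain ⟨g₀, hg₀lip, hg₀eq⟩ := hφlip.extend_real
  set g' : EuclideanSpace ℝ (Fin n) → ℝ := fun y => max (min (g₀ y) C) (-C) with hg'def
  have hg'lip : LipschitzWith k g' := (hg₀lip.min_const C).max_const (-C)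
  have hg'eq : ∀ y ∈ ω, g' y = φ y := by
    intro y hy
    have h1 : g₀ y = φ y := (hg₀eq hy).symm
    have h2 := abs_le.1 (hφC y hy)
    rw [hg'def]
    simp only [h1]
    rw [min_eq_left h2.2, max_eq_left (by linarith [h2.1])]
  have hg'le : ∀ y, g' y ≤ C := fun y => max_le (min_le_right _ _) (by linarith)
  have hg'ge : ∀ y, -C ≤ g' y := fun y => le_max_right _ _
  set ψp : EuclideanSpace ℝ (Fin n) → ℝ := fun y => max (g' y) 0 with hψpdef
  set ψm : EuclideanSpace ℝ (Fin n) → ℝ := fun y => max (-g' y) 0 with hψmdef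
  have hψplip : LipschitzWith k ψp := hg'lip.max_const 0
  have hψmlip : LipschitzWith k ψm := hg'lip.neg.max_const 0
  have hψpIcc : ∀ y, ψp y ∈ Icc (0:ℝ) C := fun y =>
    ⟨le_max_right _ _, max_le (hg'le y) hC⟩
  have hψmIcc : ∀ y, ψm y ∈ Icc (0:ℝ) C := fun y =>
    ⟨le_max_right _ _, max_le (by linarith [hg'ge y]) hC⟩
  have hdecomp : ∀ y, g' y = ψp y - ψm y := by
    intro y
    rw [hψpdef, hψmdef]
    rcases le_total 0 (g' y) with h | h
    · simp only []
      rw [max_eq_left h, max_eq_right (by linarith : -g' y ≤ 0)]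
      ring
    · simp only []
      rw [max_eq_right h, max_eq_left (by linarith : (0:ℝ) ≤ -g' y)]
      ring
  have hψp0 : ∀ y, 0 ≤ ψp y := fun y => (hψpIcc y).1
  have hψpC : ∀ y, ψp y ≤ C := fun y => (hψpIcc y).2
  have hψm0 : ∀ y, 0 ≤ ψm y := fun y => (hψmIcc y).1
  have hψmC : ∀ y, ψm y ≤ C := fun y => (hψmIcc y).2
  have hψpm : ∀ ν : Measure (EuclideanSpace ℝ (Fin n)), AEStronglyMeasurable ψp ν :=
    fun ν => hψplip.continuous.aestronglyMeasurable
  have hψmm : ∀ ν : Measure (EuclideanSpace ℝ (Fin n)), AEStronglyMeasurable ψm ν :=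
    fun ν => hψmlip.continuous.aestronglyMeasurable
  have hsplit : ∀ (ν : Measure (EuclideanSpace ℝ (Fin n))) (_ : IsFiniteMeasureOnCompacts ν)
      (r : ℝ), (∫ y in ball x r ∩ ω, φ y ∂ν)
        = (∫ y in ball x r ∩ ω, ψp y ∂ν) - ∫ y in ball x r ∩ ω, ψm y ∂ν := by
    intro ν hνinst r
    have he : EqOn φ (fun y => ψp y - ψm y) (ball x r ∩ ω) := fun y hy => by
      show φ y = ψp y - ψm y
      rw [← hdecomp y, hg'eq y hy.2]
    rw [setIntegral_congr_fun (measurableSet_ball.inter hω.measurableSet) he,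
      integral_sub (F_int hωcpt (hψpm _) hψp0 hψpC x r) (F_int hωcpt (hψmm _) hψm0 hψmC x r)]
  have Ipi := F_integrableOn (ν := μi i) hωcpt (hψpm _) hψp0 hψpC x 0 R
  have Imi := F_integrableOn (ν := μi i) hωcpt (hψmm _) hψm0 hψmC x 0 R
  have Ip := F_integrableOn (ν := μ) hωcpt (hψpm _) hψp0 hψpC x 0 R
  have Im := F_integrableOn (ν := μ) hωcpt (hψmm _) hψm0 hψmC x 0 R
  have Jp : IntegrableOn (fun r =>
      |(∫ y in ball x r ∩ ω, ψp y ∂(μi i)) - ∫ y in ball x r ∩ ω, ψp y ∂μ|)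
      (Ioo (0:ℝ) R) volume := (Ipi.sub Ip).abs
  have Jm : IntegrableOn (fun r =>
      |(∫ y in ball x r ∩ ω, ψm y ∂(μi i)) - ∫ y in ball x r ∩ ω, ψm y ∂μ|)
      (Ioo (0:ℝ) R) volume := (Imi.sub Im).abs
  have hfun : (fun r => |(∫ y in ball x r ∩ ω, φ y ∂(μi i)) - ∫ y in ball x r ∩ ω, φ y ∂μ|)
      = fun r => |((∫ y in ball x r ∩ ω, ψp y ∂(μi i)) - ∫ y in ball x r ∩ ω, ψm y ∂(μi i))
          - ((∫ y in ball x r ∩ ω, ψp y ∂μ) - ∫ y in ball x r ∩ ω, ψm y ∂μ)| := by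
    funext r
    rw [hsplit (μi i) inferInstance r, hsplit μ inferInstance r]
  have JL : IntegrableOn (fun r =>
      |((∫ y in ball x r ∩ ω, ψp y ∂(μi i)) - ∫ y in ball x r ∩ ω, ψm y ∂(μi i))
          - ((∫ y in ball x r ∩ ω, ψp y ∂μ) - ∫ y in ball x r ∩ ω, ψm y ∂μ)|)
      (Ioo (0:ℝ) R) volume := ((Ipi.sub Imi).sub (Ip.sub Im)).abs
  calc (∫ r in Ioo (0:ℝ) R,
        |(∫ y in ball x r ∩ ω, φ y ∂(μi i)) - ∫ y in ball x r ∩ ω, φ y ∂μ|)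
      = ∫ r in Ioo (0:ℝ) R,
        |((∫ y in ball x r ∩ ω, ψp y ∂(μi i)) - ∫ y in ball x r ∩ ω, ψm y ∂(μi i))
          - ((∫ y in ball x r ∩ ω, ψp y ∂μ) - ∫ y in ball x r ∩ ω, ψm y ∂μ)| := by
        rw [hfun]
    _ ≤ ∫ r in Ioo (0:ℝ) R,
        (|(∫ y in ball x r ∩ ω, ψp y ∂(μi i)) - ∫ y in ball x r ∩ ω, ψp y ∂μ|
          + |(∫ y in ball x r ∩ ω, ψm y ∂(μi i)) - ∫ y in ball x r ∩ ω, ψm y ∂μ|) := by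
        refine setIntegral_mono_on JL (Jp.add Jm) measurableSet_Ioo fun r _ => ?_
        have hrr : ((∫ y in ball x r ∩ ω, ψp y ∂(μi i)) - ∫ y in ball x r ∩ ω, ψm y ∂(μi i))
            - ((∫ y in ball x r ∩ ω, ψp y ∂μ) - ∫ y in ball x r ∩ ω, ψm y ∂μ)
            = ((∫ y in ball x r ∩ ω, ψp y ∂(μi i)) - ∫ y in ball x r ∩ ω, ψp y ∂μ)
            - ((∫ y in ball x r ∩ ω, ψm y ∂(μi i)) - ∫ y in ball x r ∩ ω, ψm y ∂μ) := by ring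
        rw [hrr]
        exact abs_sub _ _
    _ = (∫ r in Ioo (0:ℝ) R,
          |(∫ y in ball x r ∩ ω, ψp y ∂(μi i)) - ∫ y in ball x r ∩ ω, ψp y ∂μ|)
        + ∫ r in Ioo (0:ℝ) R,
          |(∫ y in ball x r ∩ ω, ψm y ∂(μi i)) - ∫ y in ball x r ∩ ω, ψm y ∂μ| :=
        integral_add Jp Jm
    _ ≤ ε/2 + ε/2 :=
        add_le_add (hN i hi ψp hψplip hψpIcc x hx) (hN i hi ψm hψmlip hψmIcc x hx)
    _ = ε := by ring
end
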